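/- arXiv:1201.4806 — 3 statements merged into one kernel-verified Lean document; each statement's English description precedes it below -/
import Mathlib

section
/- Shadowing Lemma for C^1 endomorphisms: Let M be a Riemannian manifold, U ⊂ M open, f: U → M a C^1 expanding endomorphism, and Λ ⊂ U a compact invariant expanding set for f. Then there exists a neighborhood 𝒰(Λ) ⊃ Λ such that for every η > 0 there is an ε > 0 so that every ε-pseudo orbit for f contained in 𝒰(Λ) is η-shadowed by a full orbit of f. If Λ is a locally maximal invariant set, then the shadowing full orbit is contained in Λ. -/
open Metric Set
noncomputable section

open Filter Topology

set_option maxHeartbeats 1000000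

private def itSeq {M : Type*} (g : M → M → M) (x : ℤ → M) : ℕ → ℤ → M
  | 0 => x
  | n + 1 => fun k => g (x k) (itSeq g x n (k + 1))

theorem shadow_aux {M : Type*} [NormedAddCommGroup M] [InnerProductSpace ℝ M]
    [FiniteDimensional ℝ M]
    (U : Set M) (hU : IsOpen U) (f : M → M)
    (hC1 : ContDiffOn ℝ 1 f U)
    (lam : ℝ) (hlam : 1 < lam)
    (hder : ∀ x ∈ U, ∀ v : M, lam * ‖v‖ ≤ ‖fderiv ℝ f x v‖)
    (Λ : Set M) (hΛcpt : IsCompact Λ)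
    (W : Set M) (hWo : IsOpen W) (hΛW : Λ ⊆ W) (hWU : W ⊆ U) :
    ∃ 𝒰 : Set M, IsOpen 𝒰 ∧ Λ ⊆ 𝒰 ∧
      ∀ η > (0:ℝ), ∃ ε > (0:ℝ),
        ∀ x : ℤ → M, (∀ k : ℤ, x k ∈ 𝒰) → (∀ k : ℤ, dist (f (x k)) (x (k+1)) ≤ ε) →
          ∃ y : ℤ → M, (∀ k : ℤ, f (y k) = y (k+1)) ∧
            ∀ k : ℤ, dist (y k) (x k) ≤ η ∧ y k ∈ W := by
  rcases Λ.eq_empty_or_nonempty with hΛe | hΛne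
  · refine ⟨∅, isOpen_empty, by simp [hΛe], fun η hη => ⟨1, one_pos, fun x hx _ => ?_⟩⟩
    exact absurd (hx 0) (notMem_empty _)
  have hlam0 : (0:ℝ) < lam := by linarith
  -- thickening constants
  obtain ⟨r0, hr0, hKW⟩ := hΛcpt.exists_cthickening_subset_open hWo hΛW
  obtain ⟨K, hKdef⟩ : ∃ t : Set M, t = cthickening r0 Λ := ⟨_, rfl⟩
  have hKW' : K ⊆ W := by rw [hKdef]; exact hKW
  have hKU : K ⊆ U := hKW'.trans hWU
  have hKcpt : IsCompact K := by rw [hKdef]; exact hΛcpt.cthickening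
  -- derivative, uniform continuity
  obtain ⟨φ, hφdef⟩ : ∃ t : M → M →L[ℝ] M, t = fderiv ℝ f := ⟨_, rfl⟩
  have hφcont : ContinuousOn φ U := by rw [hφdef]; exact hC1.continuousOn_fderiv_of_isOpen hU le_rfl
  have hunif := hKcpt.uniformContinuousOn_of_continuous (hφcont.mono hKU)
  rw [Metric.uniformContinuousOn_iff] at hunif
  obtain ⟨cr, hcrdef⟩ : ∃ t : ℝ, t = (lam - 1) / 2 := ⟨_, rfl⟩
  have hcr : 0 < cr := by simp only [hcrdef]; linarith
  obtain ⟨δ, hδ, hδc⟩ := hunif cr hcr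
  obtain ⟨ρ, hρdef⟩ : ∃ t : ℝ, t = min (r0 / 2) (δ / 2) := ⟨_, rfl⟩
  have hρ : 0 < ρ := by rw [hρdef]; exact lt_min (by linarith) (by linarith)
  have hρr0 : ρ ≤ r0 / 2 := by rw [hρdef]; exact min_le_left _ _
  obtain ⟨S, hSdef⟩ : ∃ t : Set M, t = cthickening (r0 / 2) Λ := ⟨_, rfl⟩
  have hSK : S ⊆ K := by rw [hSdef, hKdef]; exact cthickening_mono (by linarith) Λ
  have hball : ∀ p ∈ S, closedBall p ρ ⊆ K := by
    rw [hSdef, hKdef]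
    intro p hp
    refine (closedBall_subset_cthickening_singleton p ρ).trans ?_
    refine (cthickening_subset_of_subset ρ (singleton_subset_iff.2 hp)).trans ?_
    refine (cthickening_cthickening_subset hρ.le (by linarith) Λ).trans ?_
    exact cthickening_mono (by linarith) Λ
  -- differentiability
  have hder' : ∀ x ∈ U, ∀ v : M, lam * ‖v‖ ≤ ‖φ x v‖ := by rw [hφdef]; exact hder
  have hdiff : ∀ x ∈ U, HasFDerivAt f (φ x) x := by
    rw [hφdef]
    exact fun x hx =>
      (((hC1.differentiableOn one_ne_zero) x hx).differentiableAt (hU.mem_nhds hx)).hasFDerivAt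
  -- approximation
  have happrox : ∀ p ∈ S, ApproximatesLinearOn f (φ p) (closedBall p ρ) (Real.toNNReal cr) := by
    intro p hp a ha b hb
    have hconv : Convex ℝ (closedBall p ρ) := convex_closedBall p ρ
    have hgd : ∀ z ∈ closedBall p ρ, HasFDerivWithinAt (fun w => f w - φ p w)
        (φ z - φ p) (closedBall p ρ) z := by
      intro z hz
      exact ((hdiff z (hKU (hball p hp hz))).sub ((φ p).hasFDerivAt)).hasFDerivWithinAt
    have hbound : ∀ z ∈ closedBall p ρ, ‖φ z - φ p‖ ≤ cr := by
      intro z hz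
      have hzK : z ∈ K := hball p hp hz
      have hpK : p ∈ K := hSK hp
      have hd : dist z p < δ := by
        have h1 := mem_closedBall.1 hz
        have h2 : ρ ≤ δ / 2 := by rw [hρdef]; exact min_le_right _ _
        linarith
      have := hδc z hzK p hpK hd
      rw [dist_eq_norm] at this
      exact this.le
    have key := hconv.norm_image_sub_le_of_norm_hasFDerivWithin_le hgd hbound hb ha
    have heq : f a - φ p a - (f b - φ p b) = f a - f b - φ p (a - b) := by
      rw [map_sub]; abel
    rw [heq] at key
    refine key.trans ?_
    rw [Real.coe_toNNReal cr hcr.le]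
  -- expansion constants
  obtain ⟨ν, hνdef⟩ : ∃ t : ℝ, t = (lam + 1) / 2 := ⟨_, rfl⟩
  have hν1 : 1 < ν := by simp only [hνdef]; linarith
  have hν0 : 0 < ν := by linarith
  obtain ⟨μ, hμdef⟩ : ∃ t : ℝ, t = ν⁻¹ := ⟨_, rfl⟩
  have hμ0 : 0 < μ := by rw [hμdef]; positivity
  have hμ1 : μ < 1 := by rw [hμdef, inv_lt_one_iff₀]; right; exact hν1
  have hlamcr : lam - cr = ν := by simp only [hcrdef, hνdef]; ring
  -- anti-Lipschitz estimate
  have halip : ∀ p ∈ S, ∀ a ∈ closedBall p ρ, ∀ b ∈ closedBall p ρ,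
      ν * dist a b ≤ dist (f a) (f b) := by
    intro p hp a ha b hb
    have h1 := happrox p hp a ha b hb
    rw [Real.coe_toNNReal cr hcr.le] at h1
    have h2 : lam * ‖a - b‖ ≤ ‖φ p (a - b)‖ := hder' p (hKU (hSK hp)) (a - b)
    have h3 : ‖φ p (a - b)‖ - ‖f a - f b‖ ≤ ‖f a - f b - φ p (a - b)‖ :=
      calc ‖φ p (a - b)‖ - ‖f a - f b‖ ≤ ‖φ p (a - b) - (f a - f b)‖ := norm_sub_norm_le _ _
        _ = ‖f a - f b - φ p (a - b)‖ := norm_sub_rev _ _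
    rw [dist_eq_norm, dist_eq_norm, ← hlamcr]
    nlinarith [norm_nonneg (a - b)]
  -- local surjectivity
  have hsurj : ∀ p ∈ S, ∀ z ∈ closedBall (f p) (ν * ρ), ∃ w, w ∈ closedBall p ρ ∧ f w = z := by
    intro p hp z hz
    have hpU : p ∈ U := hKU (hSK hp)
    -- build nonlinear right inverse of φ p with norm lam⁻¹
    have hinj : Function.Injective (φ p) := by
      intro a b hab
      have h1 : φ p (a - b) = 0 := by rw [map_sub, hab, sub_self]
      have h2 : lam * ‖a - b‖ ≤ 0 := by
        have := hder' p hpU (a - b); rw [h1] at this; simpa using this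
      have : ‖a - b‖ = 0 := le_antisymm (by nlinarith [norm_nonneg (a-b)]) (norm_nonneg _)
      rwa [norm_eq_zero, sub_eq_zero] at this
    have hsur : Function.Surjective (φ p : M →ₗ[ℝ] M) := LinearMap.injective_iff_surjective.mp hinj
    let e : M ≃ₗ[ℝ] M := LinearEquiv.ofBijective (φ p : M →ₗ[ℝ] M) ⟨hinj, hsur⟩
    let E : M ≃L[ℝ] M := e.toContinuousLinearEquiv
    have hEapp : ∀ v, E v = φ p v := fun v => rfl
    let fsymm : (φ p).NonlinearRightInverse :=
      { toFun := fun w => E.symm w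
        nnnorm := Real.toNNReal lam⁻¹
        bound' := by
          intro w
          have h1 : lam * ‖E.symm w‖ ≤ ‖φ p (E.symm w)‖ := hder' p hpU (E.symm w)
          have h2 : φ p (E.symm w) = w := by rw [← hEapp]; exact E.apply_symm_apply w
          rw [h2] at h1
          rw [Real.coe_toNNReal _ (by positivity)]
          rw [inv_mul_eq_div, le_div_iff₀ hlam0, mul_comm]
          exact h1
        right_inv' := by
          intro w
          show φ p (E.symm w) = w
          rw [← hEapp]; exact E.apply_symm_apply w }
    have hso := (happrox p hp).surjOn_closedBall_of_nonlinearRightInverse fsymm hρ.le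
      (Subset.refl (closedBall p ρ))
    have hrad : ν * ρ ≤ (((fsymm.nnnorm : ℝ))⁻¹ - (Real.toNNReal cr : ℝ)) * ρ := by
      have h1 : (fsymm.nnnorm : ℝ) = lam⁻¹ := Real.coe_toNNReal _ (by positivity)
      have h2 : (Real.toNNReal cr : ℝ) = cr := Real.coe_toNNReal cr hcr.le
      rw [h1, h2, inv_inv, hlamcr]
    obtain ⟨w, hw1, hw2⟩ := hso (mem_closedBall.2 ((mem_closedBall.1 hz).trans hrad))
    exact ⟨w, hw1, hw2⟩
  -- choice of local inverse
  classical
  obtain ⟨g, hgdef⟩ : ∃ t : M → M → M, t = fun p z =>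
    if h : p ∈ S ∧ z ∈ closedBall (f p) (ν * ρ) then (hsurj p h.1 z h.2).choose else p :=
    ⟨_, rfl⟩
  have hgmem : ∀ p ∈ S, ∀ z ∈ closedBall (f p) (ν * ρ), g p z ∈ closedBall p ρ := by
    intro p hp z hz
    rw [hgdef]; simp only [dif_pos (And.intro hp hz)]
    exact (hsurj p hp z hz).choose_spec.1
  have hgf : ∀ p ∈ S, ∀ z ∈ closedBall (f p) (ν * ρ), f (g p z) = z := by
    intro p hp z hz
    rw [hgdef]; simp only [dif_pos (And.intro hp hz)]
    exact (hsurj p hp z hz).choose_spec.2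
  have hglip : ∀ p ∈ S, ∀ z ∈ closedBall (f p) (ν * ρ), ∀ z' ∈ closedBall (f p) (ν * ρ),
      dist (g p z) (g p z') ≤ μ * dist z z' := by
    intro p hp z hz z' hz'
    have h1 := halip p hp _ (hgmem p hp z hz) _ (hgmem p hp z' hz')
    rw [hgf p hp z hz, hgf p hp z' hz'] at h1
    have h2 : dist (g p z) (g p z') ≤ ν⁻¹ * dist z z' := by
      rw [le_inv_mul_iff₀ hν0]; exact h1
    rw [hμdef]; exact h2
  have hgfix : ∀ p ∈ S, g p (f p) = p := by
    intro p hp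
    have hfp : f p ∈ closedBall (f p) (ν * ρ) := mem_closedBall_self (by positivity)
    have h1 := halip p hp _ (hgmem p hp (f p) hfp) p (mem_closedBall_self hρ.le)
    rw [hgf p hp (f p) hfp] at h1
    simp only [dist_self, mul_comm] at h1
    have h2 : dist (g p (f p)) p ≤ 0 := by nlinarith [dist_nonneg (x := g p (f p)) (y := p)]
    have := le_antisymm h2 dist_nonneg
    rwa [dist_eq_zero] at this
  -- the neighborhood
  refine ⟨thickening (r0 / 2) Λ, isOpen_thickening, self_subset_thickening (by linarith) Λ, ?_⟩
  intro η hη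
  obtain ⟨r, hrdef⟩ : ∃ t : ℝ, t = min η ρ := ⟨_, rfl⟩
  have hr0' : 0 < r := by rw [hrdef]; exact lt_min hη hρ
  have hrρ : r ≤ ρ := by rw [hrdef]; exact min_le_right _ _
  have hrη : r ≤ η := by rw [hrdef]; exact min_le_left _ _
  obtain ⟨ε, hεdef⟩ : ∃ t : ℝ, t = (1 - μ) * r / 2 := ⟨_, rfl⟩
  have hε : 0 < ε := by simp only [hεdef]; nlinarith
  obtain ⟨R, hRdef⟩ : ∃ t : ℝ, t = μ * r / 2 := ⟨_, rfl⟩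
  have hR0 : 0 ≤ R := by rw [hRdef]; positivity
  have hRε : R + ε = r / 2 := by simp only [hRdef, hεdef]; ring
  refine ⟨ε, hε, ?_⟩
  intro x hx hps
  have hxS : ∀ k : ℤ, x k ∈ S := by rw [hSdef]; exact fun k => thickening_subset_cthickening _ _ (hx k)
  -- domain lemma
  have hdom : ∀ (k : ℤ) (w : M), dist w (x (k+1)) ≤ R → w ∈ closedBall (f (x k)) (ν * ρ) := by
    intro k w hw
    rw [mem_closedBall]
    have h1 : dist w (f (x k)) ≤ dist w (x (k+1)) + dist (x (k+1)) (f (x k)) := dist_triangle _ _ _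
    have h2 : dist (x (k+1)) (f (x k)) ≤ ε := by rw [dist_comm]; exact hps k
    have h3 : ρ ≤ ν * ρ := by nlinarith
    have h4 : r / 2 ≤ ρ := by linarith
    linarith
  -- the iterates
  obtain ⟨Y, hYdef⟩ : ∃ t : ℕ → ℤ → M, t = itSeq g x := ⟨_, rfl⟩
  have hY0 : ∀ k, Y 0 k = x k := by intro k; rw [hYdef]; rfl
  have hYs : ∀ n k, Y (n + 1) k = g (x k) (Y n (k + 1)) := by intro n k; rw [hYdef]; rfl
  -- uniform bound
  have hP : ∀ n, ∀ k : ℤ, dist (Y n k) (x k) ≤ R := by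
    intro n
    induction n with
    | zero => intro k; rw [hY0]; simp [hR0]
    | succ n ih =>
      intro k
      rw [hYs]
      have hdm := hdom k (Y n (k+1)) (ih (k+1))
      have hfm : f (x k) ∈ closedBall (f (x k)) (ν * ρ) := mem_closedBall_self (by positivity)
      calc dist (g (x k) (Y n (k+1))) (x k)
          = dist (g (x k) (Y n (k+1))) (g (x k) (f (x k))) := by rw [hgfix _ (hxS k)]
        _ ≤ μ * dist (Y n (k+1)) (f (x k)) := hglip _ (hxS k) _ hdm _ hfm
        _ ≤ μ * (R + ε) := by
            refine mul_le_mul_of_nonneg_left ?_ hμ0.le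
            have h1 : dist (Y n (k+1)) (f (x k)) ≤ dist (Y n (k+1)) (x (k+1))
                + dist (x (k+1)) (f (x k)) := dist_triangle _ _ _
            have h2 : dist (x (k+1)) (f (x k)) ≤ ε := by rw [dist_comm]; exact hps k
            linarith [ih (k+1)]
        _ ≤ R := by rw [hRε, hRdef]; nlinarith
  -- geometric estimate
  have hQ : ∀ n, ∀ k : ℤ, dist (Y (n+1) k) (Y n k) ≤ (μ * ε) * μ ^ n := by
    intro n
    induction n with
    | zero =>
      intro k
      rw [hYs 0 k, hY0 k, hY0 (k+1)]
      have hdm : x (k+1) ∈ closedBall (f (x k)) (ν * ρ) := hdom k _ (by simp [hR0])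
      have hfm : f (x k) ∈ closedBall (f (x k)) (ν * ρ) := mem_closedBall_self (by positivity)
      calc dist (g (x k) (x (k+1))) (x k)
          = dist (g (x k) (x (k+1))) (g (x k) (f (x k))) := by rw [hgfix _ (hxS k)]
        _ ≤ μ * dist (x (k+1)) (f (x k)) := hglip _ (hxS k) _ hdm _ hfm
        _ ≤ (μ * ε) * μ ^ 0 := by
            simp only [pow_zero, mul_one, mul_assoc]
            refine mul_le_mul_of_nonneg_left ?_ hμ0.le
            rw [dist_comm]; exact hps k
    | succ n ih =>
      intro k
      rw [hYs (n+1) k, hYs n k]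
      have hd1 := hdom k (Y (n+1) (k+1)) (hP (n+1) (k+1))
      have hd2 := hdom k (Y n (k+1)) (hP n (k+1))
      calc dist (g (x k) (Y (n+1) (k+1))) (g (x k) (Y n (k+1)))
          ≤ μ * dist (Y (n+1) (k+1)) (Y n (k+1)) := hglip _ (hxS k) _ hd1 _ hd2
        _ ≤ μ * ((μ * ε) * μ ^ n) := mul_le_mul_of_nonneg_left (ih (k+1)) hμ0.le
        _ = (μ * ε) * μ ^ (n+1) := by ring
  -- Cauchy and limit
  have hcauchy : ∀ k : ℤ, CauchySeq (fun n => Y n k) := by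
    intro k
    refine cauchySeq_of_le_geometric μ (μ * ε) hμ1 ?_
    intro n
    rw [dist_comm]
    exact hQ n k
  have hlim : ∀ k : ℤ, ∃ a, Tendsto (fun n => Y n k) atTop (𝓝 a) :=
    fun k => cauchySeq_tendsto_of_complete (hcauchy k)
  choose y hy using hlim
  -- distance bound for the limit
  have hydist : ∀ k : ℤ, dist (y k) (x k) ≤ R := by
    intro k
    have h1 : Tendsto (fun n => dist (Y n k) (x k)) atTop (𝓝 (dist (y k) (x k))) :=
      (hy k).dist tendsto_const_nhds
    exact le_of_tendsto h1 (Eventually.of_forall (fun n => hP n k))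
  have hyball : ∀ k : ℤ, y k ∈ closedBall (x k) ρ := by
    intro k
    rw [mem_closedBall]
    have : R ≤ ρ := by rw [hRdef]; nlinarith
    linarith [hydist k]
  have hyU : ∀ k : ℤ, y k ∈ U := fun k => hKU (hball _ (hxS k) (hyball k))
  have hyW : ∀ k : ℤ, y k ∈ W := fun k => hKW' (hball _ (hxS k) (hyball k))
  -- orbit property
  have horbit : ∀ k : ℤ, f (y k) = y (k + 1) := by
    intro k
    have hfY : ∀ n, f (Y (n+1) k) = Y n (k+1) := by
      intro n
      rw [hYs]
      exact hgf _ (hxS k) _ (hdom k _ (hP n (k+1)))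
    have h1 : Tendsto (fun n => Y (n+1) k) atTop (𝓝 (y k)) :=
      (hy k).comp (tendsto_add_atTop_nat 1)
    have hcf : ContinuousAt f (y k) :=
      (hC1.continuousOn.continuousAt (hU.mem_nhds (hyU k)))
    have h2 : Tendsto (fun n => f (Y (n+1) k)) atTop (𝓝 (f (y k))) := hcf.tendsto.comp h1
    have h3 : Tendsto (fun n => Y n (k+1)) atTop (𝓝 (y (k+1))) := hy (k+1)
    rw [show (fun n => f (Y (n+1) k)) = fun n => Y n (k+1) from funext hfY] at h2
    exact tendsto_nhds_unique h2 h3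
  refine ⟨y, horbit, fun k => ⟨?_, hyW k⟩⟩
  have h1 : R ≤ r := by rw [hRdef]; nlinarith
  linarith [hydist k, hrη]

/-- **Shadowing Lemma for C¹ expanding endomorphisms.** Let M be a Riemannian manifold
(here a finite-dimensional real inner product space), U ⊆ M open, f C¹ and expanding on U,
and Λ ⊆ U a compact invariant expanding set for f.  Then there is a neighborhood 𝒰 of Λ
such that for every η > 0 there is ε > 0 so that every ε-pseudo orbit of f contained in 𝒰
is η-shadowed by a full orbit of f; if moreover Λ is locally maximal, the shadowing full
orbit is contained in Λ. -/
theorem shadowing_lemma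
    {M : Type*} [NormedAddCommGroup M] [InnerProductSpace ℝ M] [FiniteDimensional ℝ M]
    (U : Set M) (hU : IsOpen U) (f : M → M)
    (hC1 : ContDiffOn ℝ 1 f U)
    -- f is expanding on U : m{D_x f} > λ > 1 on U
    (hexp : ∃ lam > (1 : ℝ), ∀ x ∈ U, ∀ v : M, lam * ‖v‖ ≤ ‖fderiv ℝ f x v‖)
    (Λ : Set M) (hΛU : Λ ⊆ U) (hΛcpt : IsCompact Λ) (hΛinv : f '' Λ = Λ) :
    ∃ 𝒰 : Set M, IsOpen 𝒰 ∧ Λ ⊆ 𝒰 ∧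
      ∀ η > (0 : ℝ), ∃ ε > (0 : ℝ),
        ∀ x : ℤ → M, (∀ k : ℤ, x k ∈ 𝒰) →
          (∀ k : ℤ, dist (f (x k)) (x (k + 1)) ≤ ε) →
          ∃ y : ℤ → M, (∀ k : ℤ, f (y k) = y (k + 1)) ∧
            (∀ k : ℤ, dist (y k) (x k) ≤ η) ∧
            ((∃ V : Set M, IsOpen V ∧ Λ ⊆ V ∧ Λ = ⋂ m : ℕ, f^[m] ⁻¹' closure V) →
              ∀ k : ℤ, y k ∈ Λ) := by
  obtain ⟨lam, hlam, hder⟩ := hexp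
  by_cases hiso : ∃ V : Set M, IsOpen V ∧ Λ ⊆ V ∧ Λ = ⋂ m : ℕ, f^[m] ⁻¹' closure V
  · obtain ⟨V, hVo, hΛV, hΛeq⟩ := hiso
    obtain ⟨𝒰, h1, h2, h3⟩ := shadow_aux U hU f hC1 lam hlam hder Λ hΛcpt (U ∩ V)
      (hU.inter hVo) (subset_inter hΛU hΛV) inter_subset_left
    refine ⟨𝒰, h1, h2, ?_⟩
    intro η hη
    obtain ⟨ε, hε, hsh⟩ := h3 η hη
    refine ⟨ε, hε, ?_⟩
    intro x hx hps
    obtain ⟨y, hy1, hy2⟩ := hsh x hx hps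
    refine ⟨y, hy1, fun k => (hy2 k).1, fun _ k => ?_⟩
    -- full orbit: f^[m] (y k) = y (k + m)
    have hiter : ∀ m : ℕ, ∀ k : ℤ, f^[m] (y k) = y (k + m) := by
      intro m
      induction m with
      | zero => intro k; simp
      | succ m ih =>
        intro k
        rw [Function.iterate_succ_apply', ih k, hy1 (k + m)]
        congr 1
        push_cast
        ring
    rw [hΛeq, mem_iInter]
    intro m
    rw [mem_preimage, hiter m k]
    exact subset_closure ((hy2 (k + m)).2).2
  · obtain ⟨𝒰, h1, h2, h3⟩ := shadow_aux U hU f hC1 lam hlam hder Λ hΛcpt U hU hΛU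
      (Subset.refl U)
    refine ⟨𝒰, h1, h2, ?_⟩
    intro η hη
    obtain ⟨ε, hε, hsh⟩ := h3 η hη
    refine ⟨ε, hε, ?_⟩
    intro x hx hps
    obtain ⟨y, hy1, hy2⟩ := hsh x hx hps
    exact ⟨y, hy1, fun k => (hy2 k).1, fun h => absurd h hiso⟩
end
end

section
/- Lemma: Let f ∈ E^r(T^n) satisfy the Main Theorem hypotheses. Then there exist a C^1 neighborhood 𝒱_2(f) of f and R > 0 such that for every g ∈ 𝒱_2(f): if x ∈ T^n satisfies g^n(x) ∉ U_0 for every n ≥ 0, then there is ε_0 > 0 such that for every 0 < ε < ε_0 there exists N = N(ε) ∈ N with B_R(g^N(x)) ⊂ g^N(B_ε(x)), where B_r(y) denotes the open ball of radius r centered at y. -/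
open Metric Set
noncomputable section

/-- Euclidean covering space ℝⁿ. -/
abbrev Rn (n : ℕ) : Type := EuclideanSpace ℝ (Fin n)

/-- The n-dimensional torus Tⁿ = ℝⁿ/ℤⁿ. -/
abbrev Torus (n : ℕ) : Type := Fin n → AddCircle (1 : ℝ)

/-- Covering projection ℝⁿ → Tⁿ. -/
def proj {n : ℕ} (x : Rn n) : Torus n := fun i => (x i : AddCircle (1 : ℝ))

/-- `F` is a lift of `f` to the universal cover. -/
def IsLift {n : ℕ} (f : Torus n → Torus n) (F : Rn n → Rn n) : Prop :=
  ∀ x, proj (F x) = f (proj x)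

/-- Volume expanding: |det Df| > σ > 1 everywhere (via a lift). -/
def VolumeExpanding {n : ℕ} (F : Rn n → Rn n) : Prop :=
  ∃ σ > (1 : ℝ), ∀ x : Rn n, σ < |LinearMap.det (fderiv ℝ F x : Rn n →ₗ[ℝ] Rn n)|

/-- Expanding on a subset S of the torus: the minimum norm of the derivative is > λ > 1. -/
def ExpandingOn {n : ℕ} (F : Rn n → Rn n) (S : Set (Torus n)) : Prop :=
  ∃ lam > (1 : ℝ), ∀ x : Rn n, proj x ∈ S → ∀ v : Rn n, lam * ‖v‖ ≤ ‖fderiv ℝ F x v‖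


/-- Fundamental domain [0,1)ⁿ of the covering. -/
def FD (n : ℕ) : Set (Rn n) := {x | ∀ i, x i ∈ Set.Ico (0 : ℝ) 1}

/-- Lift of a subset of the torus restricted to the fundamental domain. -/
def liftFD {n : ℕ} (U : Set (Torus n)) : Set (Rn n) := proj ⁻¹' U ∩ FD n

/-- Diameter of an open subset of the torus, measured on the lift to a
fundamental domain. -/
def diamT {n : ℕ} (U : Set (Torus n)) : ℝ := Metric.diam (liftFD U)

/-- sup-distance max_i |x_i - y_i| on ℝⁿ. -/
def supDist {n : ℕ} (x y : Rn n) : ℝ := ⨆ i, |x i - y i|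

/-- dist(A,B) = inf over pairs of the sup-distance. -/
def distSets {n : ℕ} (A B : Set (Rn n)) : ℝ :=
  sInf {d | ∃ x ∈ A, ∃ y ∈ B, d = supDist x y}

/-- The integer vector k ∈ ℤⁿ viewed in ℝⁿ. -/
def intVec {n : ℕ} (k : Fin n → ℤ) : Rn n := WithLp.toLp 2 (fun i => (k i : ℝ))

/-- internal diameter of U^c : min over nonzero k ∈ ℤⁿ of dist(Ũ, Ũ + k). -/
def diamInt {n : ℕ} (U : Set (Torus n)) : ℝ :=
  sInf {d | ∃ k : Fin n → ℤ, k ≠ 0 ∧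
    d = distSets (liftFD U) ((fun x => x + intVec k) '' liftFD U)}

/-- An arc in the torus, given by a (lifted) parametrization on [0,1];
the projection to the torus is required to be injective. -/
structure TorusArc (n : ℕ) where
  c : ℝ → Rn n
  contOn : ContinuousOn c (Set.Icc 0 1)
  injOn : Set.InjOn (proj ∘ c) (Set.Icc 0 1)

/-- The set of points of the arc in the torus. -/
def TorusArc.carrier {n : ℕ} (γ : TorusArc n) : Set (Torus n) :=
  (proj ∘ γ.c) '' Set.Icc 0 1

/-- The diameter of an arc, measured on its lift. -/
def TorusArc.diam {n : ℕ} (γ : TorusArc n) : ℝ := Metric.diam (γ.c '' Set.Icc 0 1)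

/-- All pre-orbits of f are dense: for every x, {w : f^k(w) = x, k ∈ ℕ} is dense. -/
def PreorbitDense {n : ℕ} (f : Torus n → Torus n) : Prop :=
  ∀ x : Torus n, Dense {w : Torus n | ∃ k : ℕ, f^[k] w = x}

/-- f is topologically transitive: some forward orbit is dense. -/
def TopTransitive {n : ℕ} (f : Torus n → Torus n) : Prop :=
  ∃ x : Torus n, Dense (Set.range fun k : ℕ => f^[k] x)

/-- ε-closeness of (lifts of) two maps in the C^r topology. -/
def CrClose {n : ℕ} (r : ℕ) (F G : Rn n → Rn n) (ε : ℝ) : Prop :=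
  ∀ i ≤ r, ∀ x : Rn n, ‖iteratedFDeriv ℝ i F x - iteratedFDeriv ℝ i G x‖ < ε

/-- Λ is a (compact, invariant) expanding set for f (with lift F). -/
def ExpandingSet {n : ℕ} (f : Torus n → Torus n) (F : Rn n → Rn n)
    (Λ : Set (Torus n)) : Prop :=
  IsCompact Λ ∧ f '' Λ = Λ ∧ ExpandingOn F Λ

/-- Λ is locally maximal (isolated) for f: it has an isolating block. -/
def LocallyMaximal {n : ℕ} (f : Torus n → Torus n) (Λ : Set (Torus n)) : Prop :=
  ∃ V : Set (Torus n), IsOpen V ∧ Λ ⊆ V ∧ Λ = ⋂ k : ℕ, f^[k] ⁻¹' closure V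

/-- V is an isolating block for Λ. -/
def IsolatingBlock {n : ℕ} (f : Torus n → Torus n) (Λ V : Set (Torus n)) : Prop :=
  IsOpen V ∧ Λ ⊆ V ∧ Λ = ⋂ k : ℕ, f^[k] ⁻¹' closure V

/-- The hypotheses of the Main Theorem on f (with lift F). -/
structure MainHyp {n : ℕ} (f : Torus n → Torus n) (F : Rn n → Rn n)
    (U0 U1 : Set (Torus n)) (δ0 : ℝ) : Prop where
  isLift : IsLift f F
  volExp : VolumeExpanding F
  preDense : PreorbitDense f
  openU0 : IsOpen U0
  diamU0 : diamT U0 < 1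
  expandingOff : ExpandingOn F U0ᶜ
  δ0pos : 0 < δ0
  δ0lt : δ0 < diamInt U0
  openU1 : IsOpen U1
  nbhdU1 : closure U0 ⊆ U1
  arcHyp : ∀ γ : TorusArc n, γ.carrier ⊆ U0ᶜ → δ0 < γ.diam →
      ∃ y ∈ γ.carrier, ∀ k : ℕ, 1 ≤ k → f^[k] y ∈ U1ᶜ
  preim : ∀ z ∈ U1ᶜ, ∃ z' ∈ U1ᶜ, f z' = z

/-- The derivative cocycle of f iterated i times, given the point-wise derivative D. -/
def Dpow {n : ℕ} (f : Torus n → Torus n) (D : Torus n → (Rn n →L[ℝ] Rn n)) :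
    ℕ → Torus n → (Rn n →L[ℝ] Rn n)
  | 0, _ => ContinuousLinearMap.id ℝ (Rn n)
  | (i + 1), x => (Dpow f D i (f x)).comp (D x)


/-- The disc orthogonal to the (differentiable) curve c at parameter t, radius r, lifted. -/
def orthoDiscLift {n : ℕ} (c : ℝ → Rn n) (t r : ℝ) : Set (Rn n) :=
  {y : Rn n | inner ℝ (y - c t) (deriv c t) = (0 : ℝ) ∧ ‖y - c t‖ ≤ r}

/-- The cylinder C(γ,r) centered at the (differentiable) arc parametrized by c with radius r. -/
def cylinder {n : ℕ} (c : ℝ → Rn n) (r : ℝ) : Set (Torus n) :=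
  proj '' ⋃ t ∈ Set.Icc (0 : ℝ) 1, orthoDiscLift c t r

/-- Bottom side of the cylinder (orthogonal disc at the initial extremal point). -/
def botDisc {n : ℕ} (c : ℝ → Rn n) (r : ℝ) : Set (Torus n) := proj '' orthoDiscLift c 0 r

/-- Top side of the cylinder (orthogonal disc at the final extremal point). -/
def topDisc {n : ℕ} (c : ℝ → Rn n) (r : ℝ) : Set (Torus n) := proj '' orthoDiscLift c 1 r

/-- A nice cylinder: simply connected, and bottom/top sides contained in the boundary. -/
def NiceCylinder {n : ℕ} (c : ℝ → Rn n) (r : ℝ) : Prop :=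
  SimplyConnectedSpace ↥(cylinder c r) ∧
    botDisc c r ⊆ frontier (cylinder c r) ∧ topDisc c r ⊆ frontier (cylinder c r)

/-- Lateral border of the cylinder: boundary minus top and bottom sides. -/
def lateralBorder {n : ℕ} (c : ℝ → Rn n) (r : ℝ) : Set (Torus n) :=
  frontier (cylinder c r) \ (botDisc c r ∪ topDisc c r)

/-- Every arc inside the cylinder going from the bottom side to the top side
has diameter at least δ. -/
def BottomToTopLarge {n : ℕ} (c : ℝ → Rn n) (r δ : ℝ) : Prop :=
  ∀ γ : TorusArc n, γ.carrier ⊆ cylinder c r →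
    proj (γ.c 0) ∈ botDisc c r → proj (γ.c 1) ∈ topDisc c r → δ ≤ γ.diam

/-- Λ separates horizontally the nice cylinder C(γ,r): some connected component Λ_c of Λ
meets the cylinder across the lateral border and disconnects the cylinder. -/
def SeparatesHorizontally {n : ℕ} (Λ : Set (Torus n)) (c : ℝ → Rn n) (r : ℝ) : Prop :=
  ∃ x ∈ Λ,
    (connectedComponentIn Λ x ∩ cylinder c r).Nonempty ∧
    (connectedComponentIn Λ x ∩ lateralBorder c r).Nonempty ∧
    ∃ p ∈ cylinder c r \ connectedComponentIn Λ x,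
      ∃ q ∈ cylinder c r \ connectedComponentIn Λ x,
        q ∉ connectedComponentIn (cylinder c r \ connectedComponentIn Λ x) p



/-! ### Auxiliary lemmas for the proof -/

section Auxiliary

lemma coe_int_addCircle (j : ℤ) : ((j : ℝ) : AddCircle (1:ℝ)) = 0 := by
  rw [AddCircle.coe_eq_zero_iff]
  exact ⟨j, by simp⟩

lemma proj_add_intVec {n : ℕ} (x : Rn n) (k : Fin n → ℤ) :
    proj (x + intVec k) = proj x := by
  funext i
  have hxk : (x + intVec k) i = x i + (k i : ℝ) := by simp [intVec]
  show (((x + intVec k) i : ℝ) : AddCircle (1:ℝ)) = (x i : AddCircle (1:ℝ))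
  rw [hxk, AddCircle.coe_add, coe_int_addCircle, add_zero]

lemma proj_eq_iff {n : ℕ} (a b : Rn n) :
    proj a = proj b ↔ ∀ i, ∃ j : ℤ, a i - b i = (j : ℝ) := by
  constructor
  · intro h i
    have : ((a i : ℝ) : AddCircle (1:ℝ)) = (b i : AddCircle (1:ℝ)) := congrFun h i
    have h2 : ((a i - b i : ℝ) : AddCircle (1:ℝ)) = 0 := by
      rw [AddCircle.coe_sub, this, sub_self]
    rw [AddCircle.coe_eq_zero_iff] at h2
    obtain ⟨j, hj⟩ := h2
    exact ⟨j, by simpa using hj.symm⟩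
  · intro h
    funext i
    obtain ⟨j, hj⟩ := h i
    have : (a i : ℝ) = b i + (j:ℝ) := by linarith
    show ((a i : ℝ) : AddCircle (1:ℝ)) = _
    rw [this, AddCircle.coe_add, coe_int_addCircle, add_zero]
    rfl

/-- A continuous real-valued function taking integer values on a preconnected space
is constant. -/
lemma int_valued_const {X : Type*} [TopologicalSpace X] [PreconnectedSpace X]
    (h : X → ℝ) (hc : Continuous h) (hi : ∀ x, ∃ j : ℤ, h x = (j : ℝ)) (x y : X) :
    h x = h y := by
  by_contra hne
  wlog hlt : h x < h y generalizing x y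
  · exact this y x (fun he => hne he.symm) (lt_of_le_of_ne (not_lt.mp hlt) (fun he => hne he.symm))
  obtain ⟨jx, hjx⟩ := hi x
  obtain ⟨jy, hjy⟩ := hi y
  have hj : (jx : ℝ) < jy := by rw [← hjx, ← hjy]; exact hlt
  have hjle : jx + 1 ≤ jy := by exact_mod_cast hj
  have hmid : (jx : ℝ) + 1/2 ∈ Icc (h x) (h y) := by
    constructor
    · rw [hjx]; linarith
    · rw [hjy]
      have : (jx : ℝ) + 1 ≤ jy := by exact_mod_cast hjle
      linarith
  have hrange : IsPreconnected (range h) := isPreconnected_range hc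
  have hsub : Icc (h x) (h y) ⊆ range h :=
    hrange.Icc_subset ⟨x, rfl⟩ ⟨y, rfl⟩
  obtain ⟨z, hz⟩ := hsub hmid
  obtain ⟨jz, hjz⟩ := hi z
  rw [hjz] at hz
  have h1 : ((jz - jx : ℤ) : ℝ) = 1/2 := by push_cast; linarith
  have h3 : ((2 * (jz - jx) : ℤ) : ℝ) = 1 := by push_cast; linarith
  have h4 : (2 * (jz - jx) : ℤ) = 1 := by exact_mod_cast h3
  omega

/-- The derivative of a lift of a torus endomorphism is `ℤⁿ`-periodic. -/
lemma fderiv_periodic {n : ℕ} (f : Torus n → Torus n) (F : Rn n → Rn n)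
    (hF : Differentiable ℝ F) (hlift : IsLift f F) (k : Fin n → ℤ) (x : Rn n) :
    fderiv ℝ F (x + intVec k) = fderiv ℝ F x := by
  set D : Rn n → Rn n := fun y => F (y + intVec k) - F y with hD
  have hDc : Continuous D := by
    apply Continuous.sub
    · exact hF.continuous.comp (continuous_id.add continuous_const)
    · exact hF.continuous
  have hDint : ∀ y i, ∃ j : ℤ, D y i = (j : ℝ) := by
    intro y i
    have h1 : proj (F (y + intVec k)) = proj (F y) := by
      rw [hlift, hlift, proj_add_intVec]
    obtain ⟨j, hj⟩ := (proj_eq_iff _ _).mp h1 i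
    exact ⟨j, hj⟩
  have hconst : ∀ y, D y = D 0 := by
    intro y
    ext i
    have hci : Continuous fun z : Rn n => D z i :=
      (EuclideanSpace.proj (𝕜 := ℝ) i).continuous.comp hDc
    exact int_valued_const _ hci (fun z => hDint z i) y 0
  have hfun : (fun y => F (y + intVec k)) = fun y => F y + D 0 := by
    funext y
    rw [← sub_eq_iff_eq_add']
    exact hconst y
  have h1 : HasFDerivAt (fun y => F (y + intVec k)) (fderiv ℝ F (x + intVec k)) x := by
    have := ((hF (x + intVec k)).hasFDerivAt).comp x
      ((hasFDerivAt_id x).add_const (intVec k))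
    simpa [Function.comp_def] using this
  have h2 : HasFDerivAt (fun y => F y + D 0) (fderiv ℝ F x) x :=
    (hF x).hasFDerivAt.add_const _
  rw [hfun] at h1
  exact h1.unique h2

lemma norm_le_sqrt_mul {n : ℕ} (v : Rn n) (C : ℝ) (hC : 0 ≤ C)
    (h : ∀ i, |v i| ≤ C) : ‖v‖ ≤ Real.sqrt n * C := by
  rw [EuclideanSpace.norm_eq]
  have h1 : ∑ i, ‖v i‖ ^ 2 ≤ ∑ _i : Fin n, C ^ 2 := by
    apply Finset.sum_le_sum
    intro i _
    have := h i
    rw [Real.norm_eq_abs]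
    nlinarith [abs_nonneg (v i)]
  have h2 : ∑ _i : Fin n, C ^ 2 = (n : ℝ) * C ^ 2 := by
    rw [Finset.sum_const, Finset.card_univ, Fintype.card_fin]
    simp [nsmul_eq_mul]
  calc Real.sqrt (∑ i, ‖v i‖ ^ 2) ≤ Real.sqrt ((n:ℝ) * C ^ 2) := by
        apply Real.sqrt_le_sqrt; rw [← h2]; exact h1
    _ = Real.sqrt n * C := by
        rw [Real.sqrt_mul (by positivity), Real.sqrt_sq hC]

lemma coord_le_norm {n : ℕ} (v : Rn n) (i : Fin n) : |v i| ≤ ‖v‖ := by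
  rw [EuclideanSpace.norm_eq]
  have h1 : |v i| = Real.sqrt (‖v i‖ ^ 2) := by
    rw [Real.sqrt_sq_eq_abs, Real.norm_eq_abs, abs_abs]
  rw [h1]
  apply Real.sqrt_le_sqrt
  exact Finset.single_le_sum (f := fun j => ‖v j‖ ^ 2) (fun j _ => by positivity)
    (Finset.mem_univ i)

lemma addCircle_dist_coe (a b : ℝ) :
    dist ((a : AddCircle (1:ℝ))) (b : AddCircle (1:ℝ)) = |a - b - round (a - b)| := by
  rw [dist_eq_norm, ← AddCircle.coe_sub, AddCircle.norm_eq]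
  norm_num

lemma addCircle_dist_le (a b : ℝ) :
    dist ((a : AddCircle (1:ℝ))) (b : AddCircle (1:ℝ)) ≤ |a - b| := by
  rw [addCircle_dist_coe]
  have := round_le (a - b) 0
  simpa using this

lemma exists_lift_point {n : ℕ} (p : Torus n) : ∃ X : Rn n, proj X = p := by
  have h : ∀ i, ∃ a : ℝ, (a : AddCircle (1:ℝ)) = p i := fun i =>
    QuotientAddGroup.mk_surjective (p i)
  choose X hX using h
  exact ⟨WithLp.toLp 2 X, funext hX⟩

/-- Choose a representative of `p` which is coordinatewise closest to `Y`. -/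
lemma exists_close_lift {n : ℕ} (p : Torus n) (Y : Rn n) :
    ∃ P : Rn n, proj P = p ∧ ∀ i, |P i - Y i| = dist (p i) (proj Y i) := by
  obtain ⟨C, hC⟩ := exists_lift_point p
  refine ⟨WithLp.toLp 2 (fun i => C i - round (C i - Y i) : Fin n → ℝ), ?_, ?_⟩
  · funext i
    show ((C i - (round (C i - Y i) : ℝ) : ℝ) : AddCircle (1:ℝ)) = p i
    rw [AddCircle.coe_sub, coe_int_addCircle, sub_zero, ← hC]
    rfl
  · intro i
    rw [← hC]
    show |C i - round (C i - Y i) - Y i| = dist ((C i : AddCircle (1:ℝ))) ((Y i : AddCircle (1:ℝ)))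
    rw [addCircle_dist_coe]
    congr 1
    ring

lemma fderiv_close {n : ℕ} {F G : Rn n → Rn n} {ε : ℝ}
    (h : CrClose 1 F G ε) (hε : 0 ≤ ε) (x : Rn n) :
    ‖fderiv ℝ F x - fderiv ℝ G x‖ ≤ ε := by
  apply ContinuousLinearMap.opNorm_le_bound _ hε
  intro v
  have h1 := h 1 le_rfl x
  have h2 : (fderiv ℝ F x - fderiv ℝ G x) v
      = (iteratedFDeriv ℝ 1 F x - iteratedFDeriv ℝ 1 G x) (fun _ => v) := by
    simp [iteratedFDeriv_one_apply]
  rw [h2]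
  calc ‖(iteratedFDeriv ℝ 1 F x - iteratedFDeriv ℝ 1 G x) (fun _ => v)‖
      ≤ ‖iteratedFDeriv ℝ 1 F x - iteratedFDeriv ℝ 1 G x‖ * ∏ _i : Fin 1, ‖v‖ :=
        (iteratedFDeriv ℝ 1 F x - iteratedFDeriv ℝ 1 G x).le_opNorm _
    _ ≤ ε * ‖v‖ := by
        simp only [Finset.prod_const, Finset.card_univ, Fintype.card_fin, pow_one]
        exact mul_le_mul_of_nonneg_right (le_of_lt h1) (norm_nonneg v)

lemma iterate_lift {n : ℕ} {g : Torus n → Torus n} {G : Rn n → Rn n}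
    (h : IsLift g G) (m : ℕ) (X : Rn n) : proj (G^[m] X) = g^[m] (proj X) := by
  induction m with
  | zero => simp
  | succ m ih =>
      rw [Function.iterate_succ_apply', Function.iterate_succ_apply', h, ih]

/-- One-step expansion: if the derivative of `G` at `c` expands by `m` and oscillates
by at most `κ < m` on a ball, then the image of the closed ball contains a definite
closed ball around `G c`. -/
lemma step_lemma {n : ℕ} (hn : 0 < n) (G : Rn n → Rn n) (hG : Differentiable ℝ G)
    (c : Rn n) (s : ℝ) (hs : 0 ≤ s) (m κ : ℝ) (hκ : 0 ≤ κ) (hκm : κ < m)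
    (hA : ∀ v : Rn n, m * ‖v‖ ≤ ‖fderiv ℝ G c v‖)
    (hosc : ∀ w ∈ closedBall c s, ‖fderiv ℝ G w - fderiv ℝ G c‖ ≤ κ) :
    closedBall (G c) ((m - κ) * s) ⊆ G '' closedBall c s := by
  have hm : 0 < m := lt_of_le_of_lt hκ hκm
  set A := fderiv ℝ G c with hAdef
  have hinj : Function.Injective A.toLinearMap := by
    intro u v huv
    have h0 : A (u - v) = 0 := by
      simp only [map_sub]
      simpa [sub_eq_zero] using congrArg id huv
    have := hA (u - v)
    rw [h0, norm_zero] at this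
    have : ‖u - v‖ ≤ 0 := by nlinarith [norm_nonneg (u - v)]
    have : u - v = 0 := by
      have := norm_nonneg (u - v); rw [← norm_eq_zero]; linarith
    exact sub_eq_zero.mp this
  have hsurj : Function.Surjective A.toLinearMap :=
    (LinearMap.injective_iff_surjective).mp hinj
  let eL : Rn n ≃ₗ[ℝ] Rn n := LinearEquiv.ofBijective A.toLinearMap ⟨hinj, hsurj⟩
  let e : Rn n ≃L[ℝ] Rn n := eL.toContinuousLinearEquiv
  have hecoe : ∀ v, e v = A v := fun v => rfl
  have hesymm : ∀ v, e (e.symm v) = v := fun v => e.apply_symm_apply v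
  have hsymm_le : ‖(e.symm : Rn n →L[ℝ] Rn n)‖ ≤ m⁻¹ := by
    apply ContinuousLinearMap.opNorm_le_bound _ (by positivity)
    intro y
    have h1 : m * ‖e.symm y‖ ≤ ‖A (e.symm y)‖ := hA _
    have h2 : A (e.symm y) = y := by rw [← hecoe]; exact hesymm y
    rw [h2] at h1
    have h3 : ((e.symm : Rn n →L[ℝ] Rn n)) y = e.symm y := rfl
    rw [h3, inv_mul_eq_div, le_div_iff₀ hm, mul_comm]
    exact h1
  have hsymm_pos : 0 < ‖(e.symm : Rn n →L[ℝ] Rn n)‖ := by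
    set i0 : Fin n := ⟨0, hn⟩
    set v0 : Rn n := EuclideanSpace.single i0 (1:ℝ) with hv0
    have hv0n : ‖v0‖ = 1 := by simp [hv0, EuclideanSpace.norm_single]
    have h1 : ‖e.symm (e v0)‖ ≤ ‖(e.symm : Rn n →L[ℝ] Rn n)‖ * ‖e v0‖ :=
      (e.symm : Rn n →L[ℝ] Rn n).le_opNorm _
    rw [e.symm_apply_apply, hv0n] at h1
    by_contra h
    push_neg at h
    have h0 : ‖(e.symm : Rn n →L[ℝ] Rn n)‖ = 0 := le_antisymm h (norm_nonneg _)
    rw [h0, zero_mul] at h1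
    linarith
  have hinv_ge : m ≤ (‖(e.symm : Rn n →L[ℝ] Rn n)‖)⁻¹ := by
    rw [le_inv_comm₀ hm hsymm_pos]
    exact hsymm_le
  set κ' : NNReal := ⟨κ, hκ⟩ with hκ'
  have happrox : ApproximatesLinearOn G A (closedBall c s) κ' := by
    intro x hx y hy
    have hd : ∀ z ∈ closedBall c s, DifferentiableAt ℝ (fun w => G w - A w) z :=
      fun z _ => (hG z).sub (A.differentiableAt)
    have hbound : ∀ z ∈ closedBall c s, ‖fderiv ℝ (fun w => G w - A w) z‖ ≤ κ := by
      intro z hz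
      have : fderiv ℝ (fun w => G w - A w) z = fderiv ℝ G z - A := by
        rw [fderiv_fun_sub (hG z) A.differentiableAt, A.fderiv]
      rw [this]
      exact hosc z hz
    have := (convex_closedBall c s).norm_image_sub_le_of_norm_fderiv_le hd hbound hy hx
    calc ‖G x - G y - A (x - y)‖ = ‖(G x - A x) - (G y - A y)‖ := by
          rw [map_sub]; congr 1; abel
      _ ≤ κ * ‖x - y‖ := this
      _ = κ' * ‖x - y‖ := rfl
  have hsurjon := happrox.surjOn_closedBall_of_nonlinearRightInverse
    e.toNonlinearRightInverse hs (Subset.refl _)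
  intro z hz
  apply hsurjon
  apply closedBall_subset_closedBall _ hz
  have hnn : (e.toNonlinearRightInverse.nnnorm : ℝ) = ‖(e.symm : Rn n →L[ℝ] Rn n)‖ := rfl
  have : m - κ ≤ (e.toNonlinearRightInverse.nnnorm : ℝ)⁻¹ - κ' := by
    rw [hnn]
    have : (κ' : ℝ) = κ := rfl
    rw [this]
    linarith [hinv_ge]
  nlinarith [hs]

end Auxiliary

/-- **Lemma.** Under the Main Theorem hypotheses there are a C¹ neighborhood 𝒱₂(f) and
R > 0 such that for every g ∈ 𝒱₂(f) and every x whose forward g-orbit never meets U₀,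
there is ε₀ > 0 so that for every 0 < ε < ε₀ there is N ∈ ℕ with
B_R(g^N(x)) ⊆ g^N(B_ε(x)). -/
theorem large_radius_lemma {n : ℕ} (r : ℕ) (hr : 1 ≤ r)
    (f : Torus n → Torus n) (F : Rn n → Rn n) (hsmooth : ContDiff ℝ r F)
    (U0 U1 : Set (Torus n)) (δ0 : ℝ)
    (hyp : MainHyp f F U0 U1 δ0) :
    ∃ ε' > (0 : ℝ), ∃ R > (0 : ℝ), ∀ (g : Torus n → Torus n) (G : Rn n → Rn n),
      IsLift g G → ContDiff ℝ 1 G → CrClose 1 F G ε' →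
      ∀ x : Torus n, (∀ m : ℕ, g^[m] x ∉ U0) →
        ∃ ε0 > (0 : ℝ), ∀ ε : ℝ, 0 < ε → ε < ε0 →
          ∃ N : ℕ, Metric.ball (g^[N] x) R ⊆ g^[N] '' Metric.ball x ε := by
  classical
  obtain ⟨lam, hlam, hexp⟩ := hyp.expandingOff
  rcases Nat.eq_zero_or_pos n with hn0 | hn
  · -- trivial case `n = 0`: the torus is a single point
    subst hn0
    refine ⟨1, one_pos, 1, one_pos, fun g G _ _ _ x _ => ⟨1, one_pos, fun ε hε _ => ⟨0, ?_⟩⟩⟩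
    intro y _
    exact ⟨x, mem_ball_self hε, Subsingleton.elim _ _⟩
  -- main case
  have hF1 : ContDiff ℝ 1 F := hsmooth.of_le (by exact_mod_cast hr)
  have hFdiff : Differentiable ℝ F := hF1.differentiable one_ne_zero
  have hDFcont : Continuous (fderiv ℝ F) := hF1.continuous_fderiv one_ne_zero
  set η : ℝ := (lam - 1) / 8 with hη
  have hηpos : 0 < η := by rw [hη]; linarith
  set K : Set (Rn n) := closedBall 0 (Real.sqrt n + 2) with hK
  have hKc : IsCompact K := isCompact_closedBall _ _
  have hUC := hKc.uniformContinuousOn_of_continuous hDFcont.continuousOn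
  rw [Metric.uniformContinuousOn_iff] at hUC
  obtain ⟨δ, hδpos, hδ⟩ := hUC η hηpos
  set ρ : ℝ := min (δ / 2) 1 with hρ
  have hρpos : 0 < ρ := lt_min (by linarith) one_pos
  have hρ1 : ρ ≤ 1 := min_le_right _ _
  have hρδ : ρ < δ := lt_of_le_of_lt (min_le_left _ _) (by linarith)
  -- oscillation of DF near the expansion region
  have hoscF : ∀ c w : Rn n, proj c ∈ U0ᶜ → ‖w - c‖ ≤ ρ →
      ‖fderiv ℝ F w - fderiv ℝ F c‖ ≤ η := by
    intro c w hc hw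
    set kv : Fin n → ℤ := fun i => ⌊c i⌋ with hkv
    set a : Rn n := c - intVec kv with ha
    set b : Rn n := w - intVec kv with hb
    have hai : ∀ i, |a i| ≤ 1 := by
      intro i
      have h1 : a i = c i - (⌊c i⌋ : ℝ) := rfl
      have h2 : 0 ≤ c i - (⌊c i⌋ : ℝ) := sub_nonneg.mpr (Int.floor_le _)
      have h3 : c i - (⌊c i⌋ : ℝ) < 1 := by
        have := Int.lt_floor_add_one (c i)
        linarith
      rw [h1, abs_le]
      constructor <;> linarith
    have hanorm : ‖a‖ ≤ Real.sqrt n := by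
      have := norm_le_sqrt_mul a 1 zero_le_one hai
      simpa using this
    have ha_mem : a ∈ K := by
      rw [hK, mem_closedBall_iff_norm, sub_zero]
      linarith
    have hb_mem : b ∈ K := by
      rw [hK, mem_closedBall_iff_norm, sub_zero]
      have h1 : b = a + (w - c) := by rw [ha, hb]; abel
      have h2 : ‖b‖ ≤ ‖a‖ + ‖w - c‖ := by rw [h1]; exact norm_add_le _ _
      linarith
    have hdab : dist a b < δ := by
      rw [dist_eq_norm]
      have h1 : a - b = c - w := by rw [ha, hb]; abel
      rw [h1, norm_sub_rev]
      linarith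
    have h1 := hδ a ha_mem b hb_mem hdab
    have hpa : fderiv ℝ F a = fderiv ℝ F c := by
      have h2 := fderiv_periodic f F hFdiff hyp.isLift kv a
      have h3 : a + intVec kv = c := by rw [ha]; abel
      rw [h3] at h2
      exact h2.symm
    have hpb : fderiv ℝ F b = fderiv ℝ F w := by
      have h2 := fderiv_periodic f F hFdiff hyp.isLift kv b
      have h3 : b + intVec kv = w := by rw [hb]; abel
      rw [h3] at h2
      exact h2.symm
    have h4 : dist (fderiv ℝ F a) (fderiv ℝ F b) = ‖fderiv ℝ F w - fderiv ℝ F c‖ := by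
      rw [hpa, hpb, dist_eq_norm, norm_sub_rev]
    rw [h4] at h1
    exact h1.le
  set R : ℝ := ρ / (Real.sqrt n + 1) with hR
  have hsqrtn : (0:ℝ) ≤ Real.sqrt n := Real.sqrt_nonneg _
  have hRpos : 0 < R := by rw [hR]; positivity
  refine ⟨η, hηpos, R, hRpos, ?_⟩
  intro g G hgl hG1 hclose x hx
  have hGdiff : Differentiable ℝ G := hG1.differentiable one_ne_zero
  have hDGF : ∀ y, ‖fderiv ℝ G y - fderiv ℝ F y‖ ≤ η := by
    intro y
    have := fderiv_close hclose hηpos.le y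
    rwa [norm_sub_rev] at this
  set μ : ℝ := (lam + 1) / 2 with hμdef
  have hμ : 1 < μ := by rw [hμdef]; linarith
  -- one-step expansion along the orbit
  have hstep : ∀ c : Rn n, proj c ∈ U0ᶜ → ∀ s : ℝ, 0 ≤ s → s ≤ ρ →
      closedBall (G c) (μ * s) ⊆ G '' closedBall c s := by
    intro c hc s hs0 hsρ
    have hA : ∀ v : Rn n, (lam - η) * ‖v‖ ≤ ‖fderiv ℝ G c v‖ := by
      intro v
      have h1 := hexp c hc v
      have h2 : ‖fderiv ℝ F c v - fderiv ℝ G c v‖ ≤ η * ‖v‖ := by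
        have h3 : fderiv ℝ F c v - fderiv ℝ G c v = (fderiv ℝ F c - fderiv ℝ G c) v := rfl
        rw [h3]
        calc ‖(fderiv ℝ F c - fderiv ℝ G c) v‖
            ≤ ‖fderiv ℝ F c - fderiv ℝ G c‖ * ‖v‖ := (fderiv ℝ F c - fderiv ℝ G c).le_opNorm v
          _ ≤ η * ‖v‖ := by
              apply mul_le_mul_of_nonneg_right _ (norm_nonneg v)
              rw [norm_sub_rev]
              exact hDGF c
      have h4 : ‖fderiv ℝ F c v‖ - ‖fderiv ℝ F c v - fderiv ℝ G c v‖ ≤ ‖fderiv ℝ G c v‖ := by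
        have := norm_sub_norm_le (fderiv ℝ F c v) (fderiv ℝ F c v - fderiv ℝ G c v)
        simpa using this
      have : (lam - η) * ‖v‖ = lam * ‖v‖ - η * ‖v‖ := by ring
      rw [this]
      linarith
    have hosc : ∀ w ∈ closedBall c s, ‖fderiv ℝ G w - fderiv ℝ G c‖ ≤ 3 * η := by
      intro w hw
      have hwc : ‖w - c‖ ≤ ρ := le_trans (mem_closedBall_iff_norm.mp hw) hsρ
      calc ‖fderiv ℝ G w - fderiv ℝ G c‖
          ≤ ‖fderiv ℝ G w - fderiv ℝ F w‖ + ‖fderiv ℝ F w - fderiv ℝ F c‖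
            + ‖fderiv ℝ F c - fderiv ℝ G c‖ := by
            have := norm_sub_le_norm_sub_add_norm_sub (fderiv ℝ G w) (fderiv ℝ F w)
              (fderiv ℝ G c)
            have h2 := norm_sub_le_norm_sub_add_norm_sub (fderiv ℝ F w) (fderiv ℝ F c)
              (fderiv ℝ G c)
            linarith
        _ ≤ η + η + η := by
            have h1 := hDGF w
            have h2 := hoscF c w hc hwc
            have h3 : ‖fderiv ℝ F c - fderiv ℝ G c‖ ≤ η := by
              rw [norm_sub_rev]; exact hDGF c
            linarith
        _ = 3 * η := by ring
    have hκm : 3 * η < lam - η := by rw [hη]; linarith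
    have h := step_lemma hn G hGdiff c s hs0 (lam - η) (3 * η) (by positivity) hκm hA hosc
    have heq : lam - η - 3 * η = μ := by rw [hη, hμdef]; ring
    rw [heq] at h
    exact h
  obtain ⟨X, hX⟩ := exists_lift_point x
  have horbit : ∀ m : ℕ, proj (G^[m] X) ∈ U0ᶜ := by
    intro m
    rw [iterate_lift hgl, hX]
    exact hx m
  -- iterated expansion
  have hiter : ∀ e : ℝ, 0 < e → ∀ m : ℕ,
      closedBall (G^[m] X) (min (μ ^ m * e) ρ) ⊆ G^[m] '' closedBall X e := by
    intro e he m
    induction m with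
    | zero =>
        simpa using closedBall_subset_closedBall (by simp : min e ρ ≤ e)
    | succ m ih =>
        have hsm : 0 < min (μ ^ m * e) ρ := lt_min (by positivity) hρpos
        have h1 : min (μ ^ (m + 1) * e) ρ ≤ μ * min (μ ^ m * e) ρ := by
          rcases le_total (μ ^ m * e) ρ with h | h
          · rw [min_eq_left h]
            refine le_trans (min_le_left _ _) (le_of_eq ?_)
            ring
          · rw [min_eq_right h]
            refine le_trans (min_le_right _ _) ?_
            nlinarith [hρpos]
        calc closedBall (G^[m + 1] X) (min (μ ^ (m + 1) * e) ρ)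
            ⊆ closedBall (G (G^[m] X)) (μ * min (μ ^ m * e) ρ) := by
              rw [Function.iterate_succ_apply']
              exact closedBall_subset_closedBall h1
          _ ⊆ G '' closedBall (G^[m] X) (min (μ ^ m * e) ρ) :=
              hstep _ (horbit m) _ hsm.le (min_le_right _ _)
          _ ⊆ G '' (G^[m] '' closedBall X e) := image_mono ih
          _ = G^[m + 1] '' closedBall X e := by
              rw [Function.iterate_succ', Set.image_comp]
  refine ⟨1, one_pos, ?_⟩
  intro ε hε hε1
  set e : ℝ := ε / 2 with he_def
  have he : 0 < e := by rw [he_def]; linarith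
  obtain ⟨N, hN⟩ := pow_unbounded_of_one_lt (ρ / e) hμ
  have hρN : ρ ≤ μ ^ N * e := by
    rw [div_lt_iff₀ he] at hN
    linarith
  have hminN : min (μ ^ N * e) ρ = ρ := min_eq_right hρN
  refine ⟨N, ?_⟩
  intro p hp
  set Y : Rn n := G^[N] X with hY
  have hYproj : proj Y = g^[N] x := by rw [hY, iterate_lift hgl, hX]
  obtain ⟨P, hPproj, hPdist⟩ := exists_close_lift p Y
  have hPi : ∀ i, |P i - Y i| ≤ R := by
    intro i
    rw [hPdist i, hYproj]
    exact le_of_lt (lt_of_le_of_lt (dist_le_pi_dist p (g^[N] x) i) hp)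
  have hPY : ‖P - Y‖ ≤ Real.sqrt n * R := by
    have : ∀ i, |(P - Y) i| ≤ R := fun i => hPi i
    exact norm_le_sqrt_mul _ R hRpos.le this
  have hPYρ : ‖P - Y‖ ≤ ρ := by
    have h1 : Real.sqrt n * R ≤ ρ := by
      rw [hR, ← mul_div_assoc, div_le_iff₀ (by linarith : (0:ℝ) < Real.sqrt n + 1)]
      nlinarith [hρpos.le]
    linarith
  have hPmem : P ∈ closedBall Y (min (μ ^ N * e) ρ) := by
    rw [hminN, mem_closedBall_iff_norm]
    exact hPYρ
  obtain ⟨Q, hQmem, hQeq⟩ := hiter e he N hPmem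
  refine ⟨proj Q, ?_, ?_⟩
  · rw [mem_ball, ← hX]
    rw [dist_pi_lt_iff hε]
    intro i
    have h1 : dist (proj Q i) (proj X i) ≤ |Q i - X i| := addCircle_dist_le _ _
    have h2 : |Q i - X i| ≤ ‖Q - X‖ := coord_le_norm (Q - X) i
    have h3 : ‖Q - X‖ ≤ e := mem_closedBall_iff_norm.mp hQmem
    have h4 : e < ε := by rw [he_def]; linarith
    calc dist (proj Q i) (proj X i) ≤ ‖Q - X‖ := le_trans h1 h2
      _ ≤ e := h3
      _ < ε := h4
  · rw [← iterate_lift hgl, hQeq, hPproj]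
end
end

section
/- Internal Radius Growing property: If f ∈ E^r(T^n) satisfies the hypotheses of the Main Theorem, then f verifies the I.R.G. property: there exists R_0 > 0 (depending only on f) such that for every nonempty open set U ⊆ T^n there exist a point x ∈ U and K ∈ N such that f^K(U) contains the ball of radius R_0 centered at f^K(x). -/
open Metric Set
noncomputable section

/-! ### Auxiliary lemmas for the proof -/

namespace IRGaux

variable {n : ℕ}

lemma coord_abs_le_dist (x y : Rn n) (i : Fin n) : |x i - y i| ≤ dist x y := by
  have h := EuclideanSpace.dist_eq x y
  have h1 : dist (x i) (y i) ^ 2 ≤ ∑ j, dist (x j) (y j) ^ 2 := by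
    apply Finset.single_le_sum (f := fun j => dist (x j) (y j) ^ 2)
    · intro j _; positivity
    · exact Finset.mem_univ i
  have h2 : |x i - y i| = dist (x i) (y i) := (Real.dist_eq _ _).symm
  rw [h2, h]
  calc dist (x i) (y i) = Real.sqrt (dist (x i) (y i) ^ 2) := by
        rw [Real.sqrt_sq dist_nonneg]
    _ ≤ Real.sqrt (∑ j, dist (x j) (y j) ^ 2) := Real.sqrt_le_sqrt h1

lemma norm_le_of_coords (x : Rn n) (R : ℝ) (h0 : 0 ≤ R) (h : ∀ i, |x i| ≤ R) :
    ‖x‖ ≤ n * R := by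
  have h1 : ‖x‖ ≤ Real.sqrt (n * R ^ 2) := by
    rw [EuclideanSpace.norm_eq]
    apply Real.sqrt_le_sqrt
    calc ∑ i, ‖x i‖ ^ 2 ≤ ∑ _i : Fin n, R ^ 2 := by
          apply Finset.sum_le_sum
          intro i _
          have := h i
          have : ‖x i‖ ≤ R := by simpa [Real.norm_eq_abs] using h i
          nlinarith [norm_nonneg (x i)]
      _ = n * R ^ 2 := by simp [Finset.sum_const, mul_comm]
  refine h1.trans ?_
  rw [show (n : ℝ) * R ^ 2 = (n : ℝ) * R * R by ring] -- sqrt(n R^2) ≤ n R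
  have hn2 : Real.sqrt ((n : ℝ) * R * R) ≤ Real.sqrt ((n:ℝ)^2 * R * R) := by
    apply Real.sqrt_le_sqrt
    have : (n : ℝ) ≤ (n : ℝ) ^ 2 := by
      rcases Nat.eq_zero_or_pos n with h | h
      · simp [h]
      · have : (1:ℝ) ≤ (n:ℝ) := by exact_mod_cast h
        nlinarith
    nlinarith [sq_nonneg R, Nat.cast_nonneg (α := ℝ) n]
  refine hn2.trans ?_
  rw [show (n:ℝ)^2 * R * R = ((n:ℝ)*R)^2 by ring, Real.sqrt_sq (by positivity)]

lemma dist_coe_addCircle (a b : ℝ) :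
    dist (a : AddCircle (1:ℝ)) (b : AddCircle (1:ℝ)) ≤ |a - b| := by
  rw [dist_eq_norm]
  rw [show ((a : AddCircle (1:ℝ)) - b) = ((a - b : ℝ) : AddCircle (1:ℝ)) from
    (QuotientAddGroup.mk_sub _ a b).symm]
  simpa using (QuotientAddGroup.norm_mk_le_norm : ‖((a - b : ℝ) : AddCircle (1:ℝ))‖ ≤ ‖a - b‖)

lemma proj_lipschitz (x y : Rn n) : dist (proj x) (proj y) ≤ dist x y := by
  refine dist_pi_le_iff dist_nonneg |>.2 fun i => ?_
  refine (dist_coe_addCircle (x i) (y i)).trans ?_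
  exact coord_abs_le_dist x y i

lemma proj_add_intVec (z : Rn n) (k : Fin n → ℤ) : proj (z + intVec k) = proj z := by
  funext i
  show (((z + intVec k) i : ℝ) : AddCircle (1:ℝ)) = (z i : AddCircle (1:ℝ))
  have h : (z + intVec k) i = z i + (k i : ℝ) := rfl
  rw [h, QuotientAddGroup.eq_iff_sub_mem]
  exact ⟨k i, by simp⟩

lemma proj_iterate {f : Torus n → Torus n} {F : Rn n → Rn n} (hl : IsLift f F) :
    ∀ (k : ℕ) (x : Rn n), proj (F^[k] x) = f^[k] (proj x) := by
  intro k
  induction k with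
  | zero => intro x; simp
  | succ m ih =>
    intro x
    rw [Function.iterate_succ_apply', Function.iterate_succ_apply', hl, ih]

lemma exists_lift_near (z : Rn n) (u : Torus n) (R : ℝ) (hR : 0 < R)
    (h : dist u (proj z) < R) : ∃ y : Rn n, proj y = u ∧ dist y z ≤ n * R := by
  have hcoord : ∀ i : Fin n, ∃ t : ℝ, (t : AddCircle (1:ℝ)) = u i - (z i : AddCircle (1:ℝ)) ∧ |t| < R := by
    intro i
    have hi : dist (u i) (proj z i) < R := lt_of_le_of_lt (dist_le_pi_dist u (proj z) i) h
    have : ‖u i - (z i : AddCircle (1:ℝ))‖ < R := by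
      rw [← dist_eq_norm]; exact hi
    obtain ⟨t, ht, hn⟩ := QuotientAddGroup.norm_lt_iff.1 this
    exact ⟨t, ht, by simpa using hn⟩
  choose t ht habs using hcoord
  refine ⟨z + (show Rn n from WithLp.toLp 2 fun i => t i), ?_, ?_⟩
  · funext i
    show ((z i + t i : ℝ) : AddCircle (1:ℝ)) = u i
    rw [QuotientAddGroup.mk_add]
    rw [ht i]
    show (z i : AddCircle (1:ℝ)) + (u i - (z i : AddCircle (1:ℝ))) = u i
    abel
  · rw [dist_eq_norm, show z + (show Rn n from WithLp.toLp 2 fun i => t i) - z = (show Rn n from WithLp.toLp 2 fun i => t i) by abel]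
    exact norm_le_of_coords _ R hR.le fun i => (habs i).le

lemma intval_const {g : Rn n → ℝ} (hg : Continuous g) (hint : ∀ z, ∃ m : ℤ, g z = m)
    (z w : Rn n) : g z = g w := by
  have hlc : IsLocallyConstant g := by
    rw [IsLocallyConstant.iff_eventually_eq]
    intro x
    have hev : ∀ᶠ y in nhds x, |g y - g x| < 1 :=
      (((hg.sub continuous_const).abs).tendsto x).eventually_lt_const (by simp)
    filter_upwards [hev] with y hy
    obtain ⟨m, hm⟩ := hint y
    obtain ⟨m', hm'⟩ := hint x
    rw [hm, hm'] at hy ⊢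
    have h2 : |m - m'| < 1 := by exact_mod_cast (by push_cast; exact hy : ((|m - m'| : ℤ) : ℝ) < 1)
    have h3 : m - m' = 0 := Int.abs_lt_one_iff.1 h2
    have : m = m' := by omega
    rw [this]
  exact hlc.apply_eq_of_isPreconnected isPreconnected_univ (mem_univ _) (mem_univ _)

lemma F_periodic {f : Torus n → Torus n} {F : Rn n → Rn n} (hl : IsLift f F)
    (hF : Continuous F) (k : Fin n → ℤ) (z : Rn n) :
    F (z + intVec k) = F z + (F (intVec k) - F 0) := by
  have hint : ∀ (z : Rn n) (i : Fin n), ∃ m : ℤ, F (z + intVec k) i - F z i = m := by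
    intro z i
    have h1 : proj (F (z + intVec k)) = proj (F z) := by
      rw [hl, hl, proj_add_intVec]
    have h2 : (F (z + intVec k) i : AddCircle (1:ℝ)) = (F z i : AddCircle (1:ℝ)) := by
      have := congrFun h1 i
      exact this
    rw [QuotientAddGroup.eq_iff_sub_mem] at h2
    obtain ⟨m, hm⟩ := AddSubgroup.mem_zmultiples_iff.1 h2
    exact ⟨m, by simp at hm ⊢; linarith⟩
  have hcoord : ∀ i : Fin n, F (z + intVec k) i - F z i = F (0 + intVec k) i - F 0 i := by
    intro i
    have hgc : Continuous fun w : Rn n => F (w + intVec k) i - F w i := by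
      apply Continuous.sub
      · exact (EuclideanSpace.proj i).continuous.comp (hF.comp (continuous_id.add continuous_const))
      · exact (EuclideanSpace.proj i).continuous.comp hF
    exact intval_const hgc (fun w => hint w i) z 0
  ext i
  have := hcoord i
  show F (z + intVec k) i = (F z + (F (intVec k) - F 0)) i
  have hrhs : (F z + (F (intVec k) - F 0)) i = F z i + (F (intVec k) i - F 0 i) := rfl
  rw [hrhs]
  rw [show (0 : Rn n) + intVec k = intVec k by abel] at this
  linarith

lemma fderiv_periodic {f : Torus n → Torus n} {F : Rn n → Rn n} (hl : IsLift f F)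
    (hF : Continuous F) (hd : Differentiable ℝ F) (k : Fin n → ℤ) (x : Rn n) :
    fderiv ℝ F (x + intVec k) = fderiv ℝ F x := by
  have h1 : HasFDerivAt (fun z : Rn n => F (z + intVec k))
      ((fderiv ℝ F (x + intVec k)).comp (ContinuousLinearMap.id ℝ (Rn n))) x := by
    exact ((hd (x + intVec k)).hasFDerivAt).comp x ((hasFDerivAt_id x).add_const (intVec k))
  have h2 : HasFDerivAt (fun z : Rn n => F z + (F (intVec k) - F 0)) (fderiv ℝ F x) x :=
    (hd x).hasFDerivAt.add_const _
  have heq : (fun z : Rn n => F (z + intVec k)) = fun z : Rn n => F z + (F (intVec k) - F 0) := by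
    funext z; exact F_periodic hl hF k z
  rw [heq] at h1
  have := h1.unique h2
  simpa using this

lemma uc_fderiv {f : Torus n → Torus n} {F : Rn n → Rn n} (hl : IsLift f F)
    (hF : ContDiff ℝ 1 F) (c : ℝ) (hc : 0 < c) :
    ∃ ρ > 0, ∀ y w : Rn n, dist w y ≤ ρ → ‖fderiv ℝ F w - fderiv ℝ F y‖ ≤ c := by
  have hcont : Continuous (fderiv ℝ F) := hF.continuous_fderiv one_ne_zero
  have hKc : IsCompact (Metric.closedBall (0 : Rn n) (n + 2)) := isCompact_closedBall _ _
  have hUC := hKc.uniformContinuousOn_of_continuous hcont.continuousOn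
  rw [Metric.uniformContinuousOn_iff] at hUC
  obtain ⟨δ, hδ, hδ'⟩ := hUC c hc
  refine ⟨min (δ / 2) 1, by positivity, fun y w hwy => ?_⟩
  set k : Fin n → ℤ := fun i => ⌊y i⌋ with hk
  have hyk : y - intVec k ∈ Metric.closedBall (0 : Rn n) (n + 2) := by
    rw [Metric.mem_closedBall, dist_zero_right]
    refine (norm_le_of_coords _ 1 zero_le_one fun i => ?_).trans (by push_cast; linarith)
    show |y i - (⌊y i⌋ : ℝ)| ≤ 1
    rw [abs_of_nonneg (by
      have := Int.floor_le (y i); linarith)]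
    have := Int.lt_floor_add_one (y i); linarith
  have hwk : w - intVec k ∈ Metric.closedBall (0 : Rn n) (n + 2) := by
    rw [Metric.mem_closedBall, dist_zero_right]
    have h1 : ‖w - intVec k‖ ≤ ‖w - y‖ + ‖y - intVec k‖ := by
      have : w - intVec k = (w - y) + (y - intVec k) := by abel
      rw [this]; exact norm_add_le _ _
    have h2 : ‖w - y‖ ≤ 1 := by
      rw [← dist_eq_norm]; exact hwy.trans (min_le_right _ _)
    have h3 : ‖y - intVec k‖ ≤ (n : ℝ) + 1 := by
      have := hyk; rw [Metric.mem_closedBall, dist_zero_right] at this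
      refine (norm_le_of_coords _ 1 zero_le_one fun i => ?_).trans (by push_cast; linarith)
      show |y i - (⌊y i⌋ : ℝ)| ≤ 1
      rw [abs_of_nonneg (by have := Int.floor_le (y i); linarith)]
      have := Int.lt_floor_add_one (y i); linarith
    push_cast
    linarith
  have hdiff : Differentiable ℝ F := hF.differentiable one_ne_zero
  have hFc : Continuous F := hF.continuous
  have hper1 : fderiv ℝ F y = fderiv ℝ F (y - intVec k) := by
    have := fderiv_periodic hl hFc hdiff k (y - intVec k)
    rw [show y - intVec k + intVec k = y by abel] at this
    exact this
  have hper2 : fderiv ℝ F w = fderiv ℝ F (w - intVec k) := by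
    have := fderiv_periodic hl hFc hdiff k (w - intVec k)
    rw [show w - intVec k + intVec k = w by abel] at this
    exact this
  rw [hper1, hper2, ← dist_eq_norm]
  have hd2 : dist (w - intVec k) (y - intVec k) < δ := by
    have : dist (w - intVec k) (y - intVec k) = dist w y := by
      rw [dist_eq_norm, dist_eq_norm]; congr 1; abel
    rw [this]
    exact lt_of_le_of_lt (hwy.trans (min_le_left _ _)) (by linarith)
  exact (hδ' _ hwk _ hyk hd2).le

lemma expand_step {F : Rn n → Rn n} (hd : Differentiable ℝ F)
    {lam c : ℝ} (hlam : 1 < lam) (hc : 0 < c) (hclam : c ≤ (lam - 1) / 2)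
    (y : Rn n) (hexp : ∀ v : Rn n, lam * ‖v‖ ≤ ‖fderiv ℝ F y v‖)
    (s : ℝ) (hs0 : 0 ≤ s)
    (hDF : ∀ w ∈ Metric.closedBall y s, ‖fderiv ℝ F w - fderiv ℝ F y‖ ≤ c) :
    Metric.closedBall (F y) ((lam + 1) / 2 * s) ⊆ F '' Metric.closedBall y s := by
  set L := fderiv ℝ F y with hL
  have hlam0 : 0 < lam := by linarith
  have hinj : Function.Injective (L : Rn n →ₗ[ℝ] Rn n) := by
    intro u v huv
    have h : L (u - v) = 0 := by
      simp only [map_sub]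
      simpa using sub_eq_zero.2 huv
    have := hexp (u - v)
    rw [show fderiv ℝ F y (u - v) = L (u - v) from rfl, h] at this
    simp only [norm_zero] at this
    have : ‖u - v‖ ≤ 0 := by nlinarith [norm_nonneg (u - v)]
    have : u - v = 0 := by
      rw [← norm_le_zero_iff]; exact this
    exact sub_eq_zero.1 this
  have hsurj : Function.Surjective (L : Rn n →ₗ[ℝ] Rn n) :=
    (LinearMap.injective_iff_surjective).1 hinj
  set e := LinearEquiv.ofBijective (L : Rn n →ₗ[ℝ] Rn n) ⟨hinj, hsurj⟩ with he
  have heapp : ∀ u, e u = L u := fun u => rfl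
  set fsymm : ContinuousLinearMap.NonlinearRightInverse L :=
    { toFun := fun u => e.symm u
      nnnorm := Real.toNNReal (lam⁻¹)
      bound' := by
        intro u
        have h1 : lam * ‖e.symm u‖ ≤ ‖L (e.symm u)‖ := hexp _
        have h2 : L (e.symm u) = u := by
          rw [← heapp]; exact e.apply_symm_apply u
        rw [h2] at h1
        have hcoe : ((Real.toNNReal (lam⁻¹) : NNReal) : ℝ) = lam⁻¹ :=
          Real.coe_toNNReal _ (by positivity)
        rw [hcoe]
        rw [inv_mul_eq_div, le_div_iff₀ hlam0]
        linarith [h1]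
      right_inv' := by
        intro u
        show L (e.symm u) = u
        rw [← heapp]; exact e.apply_symm_apply u } with hfsymm
  have happrox : ApproximatesLinearOn F L (Metric.closedBall y s) (Real.toNNReal c) := by
    intro u hu v hv
    have hg : ∀ w ∈ Metric.closedBall y s,
        HasFDerivWithinAt (fun z => F z - L z) (fderiv ℝ F w - L) (Metric.closedBall y s) w := by
      intro w _
      exact ((hd w).hasFDerivAt.sub (L.hasFDerivAt)).hasFDerivWithinAt
    have hbound : ∀ w ∈ Metric.closedBall y s, ‖fderiv ℝ F w - L‖ ≤ c := fun w hw => hDF w hw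
    have := (convex_closedBall y s).norm_image_sub_le_of_norm_hasFDerivWithin_le hg hbound hv hu
    have heq : F u - L u - (F v - L v) = F u - F v - L (u - v) := by
      simp only [map_sub]; abel
    rw [heq] at this
    rw [Real.coe_toNNReal _ hc.le]
    simpa using this
  have hsub := happrox.surjOn_closedBall_of_nonlinearRightInverse fsymm hs0 (subset_refl _)
  have hnn : ((fsymm.nnnorm : ℝ))⁻¹ = lam := by
    have : ((fsymm.nnnorm : NNReal) : ℝ) = lam⁻¹ := Real.coe_toNNReal _ (by positivity)
    rw [this, inv_inv]
  intro z hz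
  apply hsub
  refine Metric.closedBall_subset_closedBall ?_ hz
  rw [hnn, Real.coe_toNNReal _ hc.le]
  nlinarith [hs0]

lemma growth_iter {F : Rn n → Rn n} {μ ρ1 : ℝ} (hμ : 1 ≤ μ) (hρ : 0 < ρ1)
    {P : Rn n → Prop}
    (hstep : ∀ y, P y → ∀ s, 0 ≤ s → s ≤ ρ1 →
      Metric.closedBall (F y) (μ * s) ⊆ F '' Metric.closedBall y s)
    (x : Rn n) (horb : ∀ j : ℕ, P (F^[j] x)) (s : ℝ) (hs0 : 0 ≤ s) (hs1 : s ≤ ρ1) :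
    ∀ j : ℕ, Metric.closedBall (F^[j] x) (min (μ ^ j * s) ρ1) ⊆ F^[j] '' Metric.closedBall x s := by
  intro j
  induction j with
  | zero =>
    simp only [Function.iterate_zero_apply, pow_zero, one_mul, Set.image_id']
    exact fun z hz => ⟨z, Metric.closedBall_subset_closedBall (min_le_left _ _) hz, rfl⟩
  | succ m ih =>
    set sm := min (μ ^ m * s) ρ1 with hsm
    have hsm0 : 0 ≤ sm := le_min (by positivity) hρ.le
    have hsm1 : sm ≤ ρ1 := min_le_right _ _
    have hstep' := hstep (F^[m] x) (horb m) sm hsm0 hsm1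
    have hrad : min (μ ^ (m + 1) * s) ρ1 ≤ μ * sm := by
      rcases le_or_gt (μ ^ m * s) ρ1 with h | h
      · have : sm = μ ^ m * s := min_eq_left h
        rw [this]
        calc min (μ ^ (m + 1) * s) ρ1 ≤ μ ^ (m + 1) * s := min_le_left _ _
          _ = μ * (μ ^ m * s) := by ring
      · have : sm = ρ1 := min_eq_right h.le
        rw [this]
        calc min (μ ^ (m + 1) * s) ρ1 ≤ ρ1 := min_le_right _ _
          _ ≤ μ * ρ1 := by nlinarith
    calc Metric.closedBall (F^[m + 1] x) (min (μ ^ (m + 1) * s) ρ1)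
        ⊆ Metric.closedBall (F (F^[m] x)) (μ * sm) := by
          rw [Function.iterate_succ_apply']
          exact Metric.closedBall_subset_closedBall hrad
      _ ⊆ F '' Metric.closedBall (F^[m] x) sm := hstep'
      _ ⊆ F '' (F^[m] '' Metric.closedBall x s) := Set.image_mono ih
      _ = F^[m + 1] '' Metric.closedBall x s := by
          rw [Set.image_image]
          apply Set.image_congr'
          intro z
          exact (Function.iterate_succ_apply' F m z).symm

lemma F_isOpenMap {F : Rn n → Rn n} (hF : ContDiff ℝ 1 F)
    (hdet : ∀ x : Rn n, LinearMap.det (fderiv ℝ F x : Rn n →ₗ[ℝ] Rn n) ≠ 0) :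
    IsOpenMap F := by
  apply IsOpenMap.of_nhds_le
  intro a
  have hs : HasStrictFDerivAt F (fderiv ℝ F a) a :=
    (hF.contDiffAt).hasStrictFDerivAt one_ne_zero
  have hsurj : LinearMap.range (fderiv ℝ F a : Rn n →ₗ[ℝ] Rn n) = ⊤ := by
    have := (LinearMap.equivOfDetNeZero _ (hdet a)).surjective
    rw [LinearMap.range_eq_top]
    intro u
    obtain ⟨v, hv⟩ := this u
    exact ⟨v, hv⟩
  exact (hs.map_nhds_eq_of_surj hsurj).ge

lemma supDist_nonneg' (x y : Rn n) : 0 ≤ supDist x y :=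
  Real.iSup_nonneg fun i => abs_nonneg _

lemma sep_of_diamInt {U0 : Set (Torus n)} {x y : Rn n} (hx : x ∈ liftFD U0)
    (hy : y ∈ liftFD U0) {k : Fin n → ℤ} (hk : k ≠ 0) :
    diamInt U0 ≤ supDist x (y + intVec k) := by
  have h1 : diamInt U0 ≤ distSets (liftFD U0) ((fun z => z + intVec k) '' liftFD U0) := by
    apply csInf_le
    · refine ⟨0, fun d hd => ?_⟩
      obtain ⟨k', _, rfl⟩ := hd
      apply Real.sInf_nonneg
      rintro d ⟨x', _, y', _, rfl⟩
      exact supDist_nonneg' _ _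
    · exact ⟨k, hk, rfl⟩
  refine h1.trans ?_
  apply csInf_le
  · refine ⟨0, ?_⟩
    rintro d ⟨x', _, y', _, rfl⟩
    exact supDist_nonneg' _ _
  · exact ⟨x, hx, y + intVec k, ⟨y, hy, rfl⟩, rfl⟩

lemma decomp_of_mem_preimage {U0 : Set (Torus n)} {z : Rn n} (hz : proj z ∈ U0) :
    ∃ a ∈ liftFD U0, ∃ k : Fin n → ℤ, z = a + intVec k := by
  set k : Fin n → ℤ := fun i => ⌊z i⌋ with hk
  set a : Rn n := WithLp.toLp 2 (fun i => Int.fract (z i)) with ha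
  have hzak : z = a + intVec k := by
    ext i
    show z i = Int.fract (z i) + (⌊z i⌋ : ℝ)
    rw [Int.fract]
    ring
  refine ⟨a, ⟨?_, ?_⟩, k, hzak⟩
  · show proj a ∈ U0
    have : proj a = proj z := by
      have : proj (a + intVec k) = proj a := proj_add_intVec a k
      rw [← hzak] at this
      exact this.symm
    rw [this]; exact hz
  · intro i
    exact ⟨Int.fract_nonneg _, Int.fract_lt_one _⟩

lemma supDist_line (xb : Rn n) (i0 : Fin n) (u v : ℝ) :
    supDist (xb + u • EuclideanSpace.single i0 (1:ℝ))
      (xb + v • EuclideanSpace.single i0 (1:ℝ)) = |u - v| := by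
  have hcoord : ∀ i : Fin n,
      |(xb + u • EuclideanSpace.single i0 (1:ℝ)) i - (xb + v • EuclideanSpace.single i0 (1:ℝ)) i|
        = if i = i0 then |u - v| else 0 := by
    intro i
    have h1 : (xb + u • EuclideanSpace.single i0 (1:ℝ)) i
        = xb i + u * (EuclideanSpace.single i0 (1:ℝ)) i := rfl
    have h2 : (xb + v • EuclideanSpace.single i0 (1:ℝ)) i
        = xb i + v * (EuclideanSpace.single i0 (1:ℝ)) i := rfl
    rw [h1, h2, EuclideanSpace.single_apply]
    by_cases h : i = i0
    · rw [if_pos h, if_pos h, mul_one, mul_one]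
      congr 1; ring
    · rw [if_neg h, if_neg h, mul_zero, mul_zero]
      simp
  unfold supDist
  have hne : Nonempty (Fin n) := ⟨i0⟩
  apply le_antisymm
  · apply ciSup_le (by
      intro i
      rw [hcoord i]
      by_cases h : i = i0 <;> simp [h, abs_nonneg])
  · have := le_ciSup (f := fun i =>
      |(xb + u • EuclideanSpace.single i0 (1:ℝ)) i - (xb + v • EuclideanSpace.single i0 (1:ℝ)) i|)
      (Set.finite_range _).bddAbove i0
    rw [hcoord i0] at this
    simpa using this

set_option maxHeartbeats 1000000 in
lemma line_coord (xb : Rn n) (t : ℝ) (i0 : Fin n) :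
    (xb + t • EuclideanSpace.single i0 (1:ℝ)) i0 = xb i0 + t := by
  have h : (xb + t • EuclideanSpace.single i0 (1:ℝ)) i0
      = xb i0 + t * (EuclideanSpace.single i0 (1:ℝ)) i0 := rfl
  rw [h, EuclideanSpace.single_apply, if_pos rfl, mul_one]

set_option maxHeartbeats 2000000 in
lemma exists_orbit_point {f : Torus n → Torus n} {F : Rn n → Rn n}
    {U0 U1 : Set (Torus n)} {δ0 : ℝ} (hyp : MainHyp f F U0 U1 δ0) (hn : 0 < n) :
    ∃ p : Torus n, ∀ k : ℕ, f^[k] p ∈ U1ᶜ := by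
  classical
  set i0 : Fin n := ⟨0, hn⟩ with hi0
  set dstar := diamInt U0 with hdstar
  have hδd : δ0 < dstar := hyp.δ0lt
  have hd0 : 0 < dstar := lt_trans hyp.δ0pos hδd
  set A := liftFD U0 with hA
  -- A is nonempty
  set kk : Fin n → ℤ := fun j => if j = i0 then 1 else 0 with hkk
  have hkkne : kk ≠ 0 := by
    intro h
    have := congrFun h i0
    simp [hkk] at this
  have hAne : A.Nonempty := by
    by_contra h
    have hAe : liftFD U0 = ∅ := not_nonempty_iff_eq_empty.1 h
    have hzero : diamInt U0 = 0 := by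
      unfold diamInt
      have h1 : {d | ∃ k : Fin n → ℤ, k ≠ 0 ∧
          d = distSets (liftFD U0) ((fun x => x + intVec k) '' liftFD U0)} = {0} := by
        ext d
        constructor
        · rintro ⟨k, _, rfl⟩
          rw [hAe]
          have : {d | ∃ x ∈ (∅ : Set (Rn n)), ∃ y ∈ (fun x => x + intVec k) '' (∅ : Set (Rn n)),
              d = supDist x y} = ∅ := by
            ext d'; simp
          unfold distSets
          rw [this, Real.sInf_empty]
          rfl
        · rintro rfl
          refine ⟨kk, hkkne, ?_⟩
          rw [hAe]
          have : {d | ∃ x ∈ (∅ : Set (Rn n)), ∃ y ∈ (fun x => x + intVec kk) '' (∅ : Set (Rn n)),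
              d = supDist x y} = ∅ := by
            ext d'; simp
          unfold distSets
          rw [this, Real.sInf_empty]
      rw [h1, csInf_singleton]
    rw [← hdstar] at hzero
    rw [hzero] at hd0
    exact lt_irrefl _ hd0
  obtain ⟨xb, hxb⟩ := hAne
  set e1 : Rn n := EuclideanSpace.single i0 (1:ℝ) with he1
  -- dstar ≤ 1
  have hintkk : intVec kk = (1:ℝ) • e1 := by
    ext j
    show ((kk j : ℤ) : ℝ) = (1:ℝ) * (EuclideanSpace.single i0 (1:ℝ)) j
    rw [EuclideanSpace.single_apply, hkk]
    by_cases h : j = i0 <;> simp [h]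
  have hd1 : dstar ≤ 1 := by
    have := sep_of_diamInt hxb hxb hkkne
    rw [hintkk] at this
    have h2 : supDist xb (xb + (1:ℝ) • e1) = 1 := by
      have := supDist_line xb i0 0 1
      rw [show xb + (0:ℝ) • e1 = xb by simp] at this
      rw [he1]
      rw [this]
      norm_num
    rw [h2] at this
    exact this
  set η := (dstar - δ0) / 4 with hη
  have hηpos : 0 < η := by rw [hη]; linarith
  set L := δ0 + η with hLdef
  have hLpos : 0 < L := by
    have := hyp.δ0pos
    rw [hLdef]; linarith
  have hLd : η + L < dstar := by rw [hLdef, hη]; linarith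
  have hL1 : L < 1 := by
    have : L < dstar := by rw [hLdef, hη]; linarith
    linarith
  have hLδ : δ0 < L := by rw [hLdef]; linarith
  -- the set S0 and its sup
  set S0 := {t : ℝ | xb + t • e1 ∈ A} with hS0
  have h0S : (0:ℝ) ∈ S0 := by
    show xb + (0:ℝ) • e1 ∈ A
    simpa using hxb
  have hS0bdd : BddAbove S0 := by
    refine ⟨1, fun t ht => ?_⟩
    have h1 : (xb + t • e1) i0 ∈ Set.Ico (0:ℝ) 1 := ht.2 i0
    have h2 : xb i0 ∈ Set.Ico (0:ℝ) 1 := hxb.2 i0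
    rw [he1, line_coord] at h1
    have := h1.2
    have := h2.1
    linarith
  set b := sSup S0 with hb
  have hb0 : 0 ≤ b := le_csSup hS0bdd h0S
  -- the gap
  have hgap : ∀ t : ℝ, b < t → t < b + dstar → proj (xb + t • e1) ∉ U0 := by
    intro t h1 h2 hmem
    obtain ⟨a, haA, k, hzak⟩ := decomp_of_mem_preimage hmem
    by_cases hk : k = 0
    · have : xb + t • e1 ∈ A := by
        rw [hzak, hk]
        have : intVec (0 : Fin n → ℤ) = (0 : Rn n) := by
          ext j; show ((0:ℤ):ℝ) = 0; simp
        rw [this, add_zero]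
        exact haA
      have : t ≤ b := le_csSup hS0bdd this
      linarith
    · have hsep : ∀ s ∈ S0, s ≤ t - dstar := by
        intro s hs
        have hsup := sep_of_diamInt (hs : xb + s • e1 ∈ A) haA (k := k) hk
        rw [← hzak] at hsup
        have hline := supDist_line xb i0 s t
        rw [← he1] at hline
        rw [hline] at hsup
        have hst : s ≤ b := le_csSup hS0bdd hs
        have : |s - t| = t - s := by
          rw [abs_sub_comm, abs_of_nonneg (by linarith)]
        rw [this] at hsup
        linarith
      have : b ≤ t - dstar := csSup_le ⟨0, h0S⟩ hsep
      linarith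
  -- build the arc
  set carc : ℝ → Rn n := fun t => xb + (b + η + t * L) • e1 with hcarc
  have hcont : Continuous carc := by
    apply continuous_const.add
    exact (Continuous.add continuous_const (continuous_id.mul continuous_const)).smul
      continuous_const
  have hparam : ∀ t ∈ Set.Icc (0:ℝ) 1, b < b + η + t * L ∧ b + η + t * L < b + dstar := by
    intro t ht
    constructor
    · nlinarith [ht.1, hLpos]
    · nlinarith [ht.2, hLpos, hLd, hηpos]
  have havoid : ∀ t ∈ Set.Icc (0:ℝ) 1, proj (carc t) ∈ U0ᶜ := by
    intro t ht
    exact hgap _ (hparam t ht).1 (hparam t ht).2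
  have hinj : Set.InjOn (proj ∘ carc) (Set.Icc 0 1) := by
    intro t ht s hs hts
    have hcoord : ((carc t) i0 : AddCircle (1:ℝ)) = ((carc s) i0 : AddCircle (1:ℝ)) := by
      have := congrFun hts i0
      exact this
    have hct : (carc t) i0 = xb i0 + (b + η + t * L) := by rw [hcarc]; exact line_coord _ _ _
    have hcs : (carc s) i0 = xb i0 + (b + η + s * L) := by rw [hcarc]; exact line_coord _ _ _
    rw [hct, hcs, QuotientAddGroup.eq_iff_sub_mem] at hcoord
    obtain ⟨m, hm⟩ := AddSubgroup.mem_zmultiples_iff.1 hcoord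
    have hmval : (m : ℝ) = (t - s) * L := by
      have h1 : (m : ℝ) = m • (1:ℝ) := by simp
      rw [h1, hm]; ring
    have habs : |(m : ℝ)| < 1 := by
      rw [hmval, abs_mul, abs_of_nonneg hLpos.le]
      have h1 : |t - s| ≤ 1 := by
        rw [abs_le]
        constructor <;> nlinarith [ht.1, ht.2, hs.1, hs.2]
      nlinarith [abs_nonneg (t - s), hL1, hLpos]
    have hm0 : m = 0 := by
      have : |m| < 1 := by exact_mod_cast (by push_cast; exact habs : ((|m| : ℤ) : ℝ) < 1)
      exact Int.abs_lt_one_iff.1 this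
    rw [hm0] at hmval
    simp only [Int.cast_zero] at hmval
    have : t - s = 0 := by
      rcases mul_eq_zero.1 hmval.symm with h | h
      · linarith [h]
      · exact absurd h hLpos.ne'
    linarith
  set γ : TorusArc n := ⟨carc, hcont.continuousOn, hinj⟩ with hγ
  have hcarrier : γ.carrier ⊆ U0ᶜ := by
    rintro u ⟨t, ht, rfl⟩
    exact havoid t ht
  have hdiam : δ0 < γ.diam := by
    have hmem0 : carc 0 ∈ carc '' Set.Icc (0:ℝ) 1 := ⟨0, by norm_num, rfl⟩
    have hmem1 : carc 1 ∈ carc '' Set.Icc (0:ℝ) 1 := ⟨1, by norm_num, rfl⟩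
    have hbdd : Bornology.IsBounded (carc '' Set.Icc (0:ℝ) 1) :=
      (isCompact_Icc.image_of_continuousOn hcont.continuousOn).isBounded
    have hdist : dist (carc 0) (carc 1) = L := by
      rw [dist_eq_norm]
      have : carc 0 - carc 1 = ((b + η + 0 * L) - (b + η + 1 * L)) • e1 := by
        rw [hcarc]
        simp only
        rw [sub_smul]
        abel
      rw [this]
      rw [norm_smul]
      have : ‖e1‖ = 1 := by
        rw [he1, EuclideanSpace.norm_single]
        norm_num
      rw [this, mul_one]
      rw [Real.norm_eq_abs]
      rw [show b + η + 0 * L - (b + η + 1 * L) = -L by ring, abs_neg, abs_of_nonneg hLpos.le]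
    have : L ≤ γ.diam := by
      rw [show γ.diam = Metric.diam (carc '' Set.Icc 0 1) from rfl, ← hdist]
      exact Metric.dist_le_diam_of_mem hbdd hmem0 hmem1
    linarith
  obtain ⟨y, _, hy2⟩ := hyp.arcHyp γ hcarrier hdiam
  refine ⟨f y, fun k => ?_⟩
  have : f^[k] (f y) = f^[k + 1] y := by
    rw [Function.iterate_succ_apply]
  rw [this]
  exact hy2 (k + 1) (by omega)

end IRGaux

/-- **Internal Radius Growing property.** If f satisfies the Main Theorem hypotheses,
then there is R₀ > 0 such that every nonempty open set U contains a point x for which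
some iterate f^K(U) contains the ball of radius R₀ around f^K(x). -/
theorem irg_property {n : ℕ} (r : ℕ) (hr : 1 ≤ r)
    (f : Torus n → Torus n) (F : Rn n → Rn n) (hsmooth : ContDiff ℝ r F)
    (U0 U1 : Set (Torus n)) (δ0 : ℝ)
    (hyp : MainHyp f F U0 U1 δ0) :
    ∃ R0 > (0 : ℝ), ∀ U : Set (Torus n), IsOpen U → U.Nonempty →
      ∃ x ∈ U, ∃ K : ℕ, Metric.ball (f^[K] x) R0 ⊆ f^[K] '' U := by
  classical
  rcases Nat.eq_zero_or_pos n with hn0 | hn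
  · -- degenerate case n = 0 : the hypotheses are contradictory
    exfalso
    have hempty : {d | ∃ k : Fin n → ℤ, k ≠ 0 ∧
        d = distSets (liftFD U0) ((fun x => x + intVec k) '' liftFD U0)} = ∅ := by
      ext d
      simp only [Set.mem_setOf_eq, Set.mem_empty_iff_false, iff_false, not_exists]
      rintro k ⟨hk, _⟩
      apply hk
      funext i
      exact absurd (i.2.trans_eq hn0) (Nat.not_lt_zero _)
    have : diamInt U0 = 0 := by
      unfold diamInt
      rw [hempty, Real.sInf_empty]
    have h1 := hyp.δ0lt
    have h2 := hyp.δ0pos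
    rw [this] at h1
    linarith
  -- main case n ≥ 1
  obtain ⟨p, hp⟩ := IRGaux.exists_orbit_point hyp hn
  obtain ⟨lam, hlam, hexp⟩ := hyp.expandingOff
  have hF1 : ContDiff ℝ 1 F := hsmooth.of_le (by exact_mod_cast hr)
  have hdiff : Differentiable ℝ F := hF1.differentiable one_ne_zero
  have hFc : Continuous F := hF1.continuous
  -- positive distance between U1ᶜ and U0
  have hgap : ∃ g > (0:ℝ), ∀ z ∈ U1ᶜ, ∀ u : Torus n, dist u z ≤ g → u ∈ U0ᶜ := by
    rcases U0.eq_empty_or_nonempty with h0 | h0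
    · exact ⟨1, one_pos, fun z _ u _ => by simp [h0]⟩
    · have hU1c_compact : IsCompact (U1ᶜ) := hyp.openU1.isClosed_compl.isCompact
      have hU1c_ne : (U1ᶜ).Nonempty := ⟨p, by simpa using hp 0⟩
      obtain ⟨z0, hz0, hmin⟩ := hU1c_compact.exists_isMinOn hU1c_ne
        ((continuous_infDist_pt U0).continuousOn)
      have hz0pos : 0 < infDist z0 U0 := by
        rcases (infDist_nonneg (s := U0) (x := z0)).lt_or_eq with h | h
        · exact h
        · exfalso
          have : z0 ∈ closure U0 := (mem_closure_iff_infDist_zero h0).2 h.symm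
          exact hz0 (hyp.nbhdU1 this)
      refine ⟨infDist z0 U0 / 2, by linarith, fun z hz u hu => ?_⟩
      intro huU0
      have h1 : infDist z U0 ≤ dist z u := infDist_le_dist_of_mem huU0
      have h2 : infDist z0 U0 ≤ infDist z U0 := hmin hz
      rw [dist_comm] at h1
      linarith [hu]
  obtain ⟨g, hgpos, hg⟩ := hgap
  set c := (lam - 1) / 2 with hc
  have hcpos : 0 < c := by rw [hc]; linarith
  obtain ⟨ρc, hρc, hUC⟩ := IRGaux.uc_fderiv hyp.isLift hF1 c hcpos
  set ρ1 := min ρc (min g 1) with hρ1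
  have hρ1pos : 0 < ρ1 := lt_min hρc (lt_min hgpos one_pos)
  have hρ1c : ρ1 ≤ ρc := min_le_left _ _
  have hρ1g : ρ1 ≤ g := (min_le_right _ _).trans (min_le_left _ _)
  set μ := (lam + 1) / 2 with hμdef
  have hμ : 1 < μ := by rw [hμdef]; linarith
  -- the single-step expansion property
  have hstep : ∀ y : Rn n, proj y ∈ U1ᶜ → ∀ s : ℝ, 0 ≤ s → s ≤ ρ1 →
      Metric.closedBall (F y) (μ * s) ⊆ F '' Metric.closedBall y s := by
    intro y hy s hs0 hs1
    have hyU0 : proj y ∈ U0ᶜ := hg _ hy _ (by simp [hgpos.le])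
    have hDF : ∀ w ∈ Metric.closedBall y s, ‖fderiv ℝ F w - fderiv ℝ F y‖ ≤ c := by
      intro w hw
      exact hUC y w ((Metric.mem_closedBall.1 hw).trans (hs1.trans hρ1c))
    have := IRGaux.expand_step hdiff hlam hcpos (le_of_eq hc) y (hexp y hyU0) s hs0 hDF
    rw [hμdef]
    exact this
  -- F is an open map
  have hopen : IsOpenMap F := by
    apply IRGaux.F_isOpenMap hF1
    intro x hdet0
    obtain ⟨σ, hσ, hdet⟩ := hyp.volExp
    have := hdet x
    rw [hdet0] at this
    simp at this
    linarith
  -- the uniform radius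
  set R0 := ρ1 / (n + 1) with hR0
  have hR0pos : 0 < R0 := by rw [hR0]; positivity
  refine ⟨R0, hR0pos, ?_⟩
  intro U hU hUne
  -- a point of U mapping onto p
  obtain ⟨w, hwS, hwU⟩ := (hyp.preDense p).exists_mem_open hU hUne
  obtain ⟨m, hwm⟩ := hwS
  obtain ⟨ε, hεpos, hball⟩ := Metric.isOpen_iff.1 hU w hwU
  -- a lift of w
  have hlift : ∀ i : Fin n, ∃ t : ℝ, (t : AddCircle (1:ℝ)) = w i := fun i =>
    QuotientAddGroup.mk'_surjective _ (w i)
  choose wt hwt using hlift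
  set wl : Rn n := WithLp.toLp 2 (fun i => wt i) with hwl
  have hprojwl : proj wl = w := by
    funext i
    exact hwt i
  have hproj_ball : proj '' Metric.ball wl ε ⊆ U := by
    rintro u ⟨z, hz, rfl⟩
    apply hball
    rw [Metric.mem_ball, ← hprojwl]
    exact lt_of_le_of_lt (IRGaux.proj_lipschitz z wl) hz
  -- push the ball forward m times; it is an open neighborhood of a lift of p
  have hFm_open' : ∀ mm : ℕ, IsOpenMap (F^[mm]) := by
    intro mm
    induction mm with
    | zero => simpa using IsOpenMap.id
    | succ k ih => rw [Function.iterate_succ']; exact hopen.comp ih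
  have hFm_open : IsOpenMap (F^[m]) := hFm_open' m
  have himage_open : IsOpen (F^[m] '' Metric.ball wl ε) :=
    hFm_open _ Metric.isOpen_ball
  have hPmem : F^[m] wl ∈ F^[m] '' Metric.ball wl ε :=
    ⟨wl, Metric.mem_ball_self hεpos, rfl⟩
  obtain ⟨r', hr'pos, hr'ball⟩ := Metric.isOpen_iff.1 himage_open _ hPmem
  set rt := min (r' / 2) ρ1 with hrt
  have hrtpos : 0 < rt := lt_min (by linarith) hρ1pos
  have hrtball : Metric.closedBall (F^[m] wl) rt ⊆ F^[m] '' Metric.ball wl ε := by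
    intro z hz
    apply hr'ball
    rw [Metric.mem_ball]
    calc dist z (F^[m] wl) ≤ rt := Metric.mem_closedBall.1 hz
      _ ≤ r' / 2 := min_le_left _ _
      _ < r' := by linarith
  -- the orbit of the center stays in U1ᶜ
  have hcenter_orbit : ∀ j : ℕ, proj (F^[j] (F^[m] wl)) ∈ U1ᶜ := by
    intro j
    rw [IRGaux.proj_iterate hyp.isLift, IRGaux.proj_iterate hyp.isLift, hprojwl, hwm]
    exact hp j
  -- iterate until the radius saturates
  obtain ⟨j, hj⟩ := pow_unbounded_of_one_lt (ρ1 / rt) hμ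
  have hjρ : ρ1 ≤ μ ^ j * rt := by
    rw [div_lt_iff₀ hrtpos] at hj
    linarith
  have hgrow := IRGaux.growth_iter hμ.le hρ1pos
    (P := fun y => proj y ∈ U1ᶜ) hstep (F^[m] wl) hcenter_orbit rt hrtpos.le
    (min_le_right _ _) j
  rw [min_eq_right hjρ] at hgrow
  -- conclusion
  refine ⟨w, hwU, j + m, ?_⟩
  intro u hu
  have hcenter : proj (F^[j] (F^[m] wl)) = f^[j + m] w := by
    rw [IRGaux.proj_iterate hyp.isLift, IRGaux.proj_iterate hyp.isLift, hprojwl,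
      ← Function.iterate_add_apply]
  obtain ⟨uh, huhproj, huhdist⟩ := IRGaux.exists_lift_near (F^[j] (F^[m] wl)) u R0 hR0pos
    (by rw [hcenter]; exact Metric.mem_ball.1 hu)
  have huhball : uh ∈ Metric.closedBall (F^[j] (F^[m] wl)) ρ1 := by
    rw [Metric.mem_closedBall]
    refine huhdist.trans ?_
    rw [hR0, show (n:ℝ) * (ρ1 / ((n:ℝ) + 1)) = ρ1 * n / ((n:ℝ) + 1) by ring,
      div_le_iff₀ (by positivity : (0:ℝ) < (n:ℝ) + 1)]
    nlinarith [hρ1pos.le, Nat.cast_nonneg (α := ℝ) n]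
  obtain ⟨v, hv, hvu⟩ := hgrow huhball
  obtain ⟨z, hz, hzv⟩ := hrtball hv
  refine ⟨proj z, hproj_ball ⟨z, hz, rfl⟩, ?_⟩
  rw [← IRGaux.proj_iterate hyp.isLift, Function.iterate_add_apply, hzv, hvu, huhproj]
end
end
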